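/- arXiv:1203.3237 — 4 statements merged into one kernel-verified Lean document; each statement's English description precedes it below -/
import Mathlib

section
/- (Z-property for cosets) Let W be a Coxeter group, J ⊆ S, σ, τ ∈ W/W_J, and s a simple reflection with sσ ≤ σ and sτ ≤ τ (in the Bruhat order on W/W_J). Then σ ≤ τ if and only if sσ ≤ τ, if and only if sσ ≤ sτ. -/
namespace KMChev

open CoxeterSystem

variable {B W : Type*} [Group W] {M : CoxeterMatrix B}

/-- Bruhat covering relation: `w = v t` for a reflection `t` and `ℓ(w) = ℓ(v) + 1`. -/
def BruhatCov (cs : CoxeterSystem M W) (v w : W) : Prop :=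
  (∃ t : W, cs.IsReflection t ∧ w = v * t) ∧ cs.length w = cs.length v + 1

/-- The (strong) Bruhat order on a Coxeter group. -/
def BruhatLE (cs : CoxeterSystem M W) : W → W → Prop :=
  Relation.ReflTransGen (BruhatCov cs)

/-- Strict Bruhat order. -/
def BruhatLT (cs : CoxeterSystem M W) (v w : W) : Prop :=
  BruhatLE cs v w ∧ v ≠ w

/-- The standard parabolic subgroup `W_J` generated by the simple reflections in `J`. -/
def WJ (cs : CoxeterSystem M W) (J : Set B) : Subgroup W :=
  Subgroup.closure (cs.simple '' J)

/-- The set `W^J` of minimal length coset representatives: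
`w` with `ℓ(w s_j) > ℓ(w)` for all `j ∈ J`. -/
def MinRep (cs : CoxeterSystem M W) (J : Set B) : Set W :=
  {w : W | ∀ j ∈ J, cs.length w < cs.length (w * cs.simple j)}

/-- The Bruhat order on `W/W_J`, transported from `W^J` via `w ↦ w W_J`. -/
def CosetLE (cs : CoxeterSystem M W) (J : Set B) (σ τ : W ⧸ WJ cs J) : Prop :=
  ∃ v w : W, v ∈ MinRep cs J ∧ w ∈ MinRep cs J ∧
    (QuotientGroup.mk v : W ⧸ WJ cs J) = σ ∧ (QuotientGroup.mk w : W ⧸ WJ cs J) = τ ∧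
    BruhatLE cs v w

/-- Strict Bruhat order on `W/W_J`. -/
def CosetLT (cs : CoxeterSystem M W) (J : Set B) (σ τ : W ⧸ WJ cs J) : Prop :=
  CosetLE cs J σ τ ∧ σ ≠ τ

end KMChev


namespace KMChev


open CoxeterSystem List

open scoped Classical

variable {B W : Type*} [Group W] {M : CoxeterMatrix B} (cs : CoxeterSystem M W)

lemma sandwich (i : B) (w : W) :
    cs.simple i * (cs.simple i * w * cs.simple i) * cs.simple i = w := by
  rw [← mul_assoc, ← mul_assoc, cs.simple_mul_simple_self, one_mul,
    cs.simple_mul_simple_cancel_right]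

lemma simple_conj_eq_iff (i : B) (w t : W) :
    cs.simple i * w * cs.simple i = t ↔ w = cs.simple i * t * cs.simple i := by
  constructor
  · rintro rfl
    exact (sandwich cs i w).symm
  · rintro rfl
    exact sandwich cs i t

lemma zmod2_add_self (e : ZMod 2) (a : ZMod 2) : e + a + a = e := by
  rw [add_assoc, CharTwo.add_self_eq_zero, add_zero]

noncomputable def refPerm (i : B) : Equiv.Perm (W × ZMod 2) :=
  Function.Involutive.toPerm
    (fun x => (cs.simple i * x.1 * cs.simple i, x.2 + if x.1 = cs.simple i then 1 else 0))
    (by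
      rintro ⟨w, e⟩
      have h2 : (cs.simple i * w * cs.simple i = cs.simple i) ↔ w = cs.simple i := by
        rw [simple_conj_eq_iff, cs.simple_mul_simple_cancel_right]
      simp only [sandwich, h2]
      by_cases h : w = cs.simple i <;> simp [h]
      show e + 1 + 1 = e
      exact zmod2_add_self e 1)

lemma refPerm_apply (i : B) (w : W) (e : ZMod 2) :
    refPerm cs i (w, e) = (cs.simple i * w * cs.simple i,
      e + if w = cs.simple i then 1 else 0) := rfl

private lemma sum_range_add' (f : ℕ → ZMod 2) (a b : ℕ) :
    ∑ l ∈ Finset.range (a + b), f l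
      = (∑ l ∈ Finset.range a, f l) + ∑ l ∈ Finset.range b, f (a + l) := by
  induction b with
  | zero => simp
  | succ b ih => rw [← Nat.add_assoc, Finset.sum_range_succ, ih, Finset.sum_range_succ, add_assoc]

lemma refPerm_liftable : M.IsLiftable (refPerm cs) := by
  intro i i'
  set p : W := cs.simple i * cs.simple i' with hp
  have hps : p * cs.simple i' = cs.simple i := by
    rw [hp, mul_assoc, cs.simple_mul_simple_self, mul_one]
  have hsip : cs.simple i * p = cs.simple i' := by
    rw [hp, ← mul_assoc, cs.simple_mul_simple_self, one_mul]
  have hshift0 : ∀ l : ℕ, p * (cs.simple i' * p ^ (l+2)) * p⁻¹ = cs.simple i' * p ^ l := by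
    intro l
    calc p * (cs.simple i' * p ^ (l+2)) * p⁻¹
        = (p * cs.simple i') * (p ^ (l+2) * p⁻¹) := by group
      _ = cs.simple i * p ^ (l+1) := by
          rw [hps]
          congr 1
          rw [pow_succ]
          group
      _ = (cs.simple i * p) * p ^ l := by rw [mul_assoc, ← pow_succ']
      _ = cs.simple i' * p ^ l := by rw [hsip]
  have key : ∀ (k : ℕ) (w : W) (e : ZMod 2),
      ((refPerm cs i * refPerm cs i') ^ k) (w, e)
        = (p ^ k * w * (p ^ k)⁻¹,
           e + ∑ l ∈ Finset.range (2 * k),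
             if w = cs.simple i' * p ^ l then 1 else 0) := by
    intro k
    induction k with
    | zero => intro w e; simp
    | succ k ih =>
      intro w e
      have hmul : ((refPerm cs i * refPerm cs i') ^ (k+1)) (w, e)
          = ((refPerm cs i * refPerm cs i') ^ k)
              ((refPerm cs i * refPerm cs i') (w, e)) := by
        rw [pow_succ]; rfl
      have hg : (refPerm cs i * refPerm cs i') (w, e)
          = (p * w * p⁻¹, e + ((if w = cs.simple i' * p ^ 0 then 1 else 0)
              + if w = cs.simple i' * p ^ 1 then 1 else 0)) := by
        show refPerm cs i (refPerm cs i' (w, e)) = _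
        rw [refPerm_apply, refPerm_apply]
        have hc : (cs.simple i' * w * cs.simple i' = cs.simple i)
            ↔ w = cs.simple i' * p ^ 1 := by
          rw [simple_conj_eq_iff, pow_one, hp, ← mul_assoc]
        have hfirst : cs.simple i * (cs.simple i' * w * cs.simple i') * cs.simple i
            = p * w * p⁻¹ := by
          rw [hp, mul_inv_rev, cs.inv_simple, cs.inv_simple]
          group
        have hcond : (w = cs.simple i') ↔ (w = cs.simple i' * p ^ 0) := by
          rw [pow_zero, mul_one]
        rw [hc, hfirst]
        congr 1
        rw [hcond, add_assoc]
      rw [hmul, hg, ih]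
      rw [Prod.mk.injEq]
      constructor
      · rw [pow_succ]
        group
      · have hshift : ∀ l : ℕ, (p * w * p⁻¹ = cs.simple i' * p ^ l)
            ↔ (w = cs.simple i' * p ^ (l + 2)) := by
          intro l
          rw [← hshift0 l, mul_left_inj, mul_right_inj]
        simp only [hshift]
        have : ∑ l ∈ Finset.range (2 * (k+1)), (if w = cs.simple i' * p ^ l then 1 else 0 : ZMod 2)
            = ((if w = cs.simple i' * p ^ 0 then 1 else 0)
              + if w = cs.simple i' * p ^ 1 then 1 else 0)
              + ∑ l ∈ Finset.range (2 * k), (if w = cs.simple i' * p ^ (l+2) then 1 else 0) := by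
          have h2k : 2 * (k+1) = 2 + 2 * k := by ring
          rw [h2k, sum_range_add' (fun l => if w = cs.simple i' * p ^ l then 1 else 0) 2 (2*k)]
          congr 1
          · rw [Finset.sum_range_succ, Finset.sum_range_one]
          · apply Finset.sum_congr rfl
            intro l _
            rw [Nat.add_comm 2 l]
        rw [this, add_assoc]
  rcases Nat.eq_zero_or_pos (M i i') with hM | hM
  · rw [hM, pow_zero]
  · apply Equiv.ext
    rintro ⟨w, e⟩
    rw [key (M i i') w e]
    have hpM : p ^ (M i i') = 1 := cs.simple_mul_simple_pow i i'
    have hsum : ∑ l ∈ Finset.range (2 * M i i'),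
        (if w = cs.simple i' * p ^ l then (1:ZMod 2) else 0) = 0 := by
      calc ∑ l ∈ Finset.range (2 * M i i'), (if w = cs.simple i' * p ^ l then (1:ZMod 2) else 0)
          = (∑ l ∈ Finset.range (M i i'), (if w = cs.simple i' * p ^ l then (1:ZMod 2) else 0))
            + ∑ l ∈ Finset.range (M i i'),
              (if w = cs.simple i' * p ^ (M i i' + l) then (1:ZMod 2) else 0) := by
            rw [two_mul]
            exact sum_range_add' _ _ _
        _ = (∑ l ∈ Finset.range (M i i'), (if w = cs.simple i' * p ^ l then (1:ZMod 2) else 0))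
            + ∑ l ∈ Finset.range (M i i'),
              (if w = cs.simple i' * p ^ l then (1:ZMod 2) else 0) := by
            congr 1
            apply Finset.sum_congr rfl
            intro l _
            rw [pow_add, hpM, one_mul]
        _ = 0 := CharTwo.add_self_eq_zero _
    rw [hsum, add_zero, hpM]
    simp



noncomputable def refHom : W →* Equiv.Perm (W × ZMod 2) :=
  cs.lift ⟨refPerm cs, refPerm_liftable cs⟩

lemma refHom_simple (i : B) : refHom cs (cs.simple i) = refPerm cs i :=
  cs.lift_apply_simple (refPerm_liftable cs) i

noncomputable def eta (w x : W) : ZMod 2 := (refHom cs w (x, 0)).2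

lemma refHom_apply (w x : W) (e : ZMod 2) :
    refHom cs w (x, e) = (w * x * w⁻¹, e + eta cs w x) := by
  have key : ∀ w x e, (refHom cs w (x, e)).1 = w * x * w⁻¹ ∧
      (refHom cs w (x, e)).2 = e + (refHom cs w (x, 0)).2 := by
    intro w
    induction w using cs.simple_induction_left with
    | one =>
      intro x e
      simp [map_one]
    | mul_simple_left w i ih =>
      intro x e
      have hm : refHom cs (cs.simple i * w) (x, e)
          = refPerm cs i (refHom cs w (x, e)) := by
        rw [map_mul, refHom_simple]
        rfl
      have hm0 : refHom cs (cs.simple i * w) (x, 0)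
          = refPerm cs i (refHom cs w (x, 0)) := by
        rw [map_mul, refHom_simple]
        rfl
      have hpair : refHom cs w (x, e)
          = (w * x * w⁻¹, e + (refHom cs w (x, 0)).2) := by
        rw [← (ih x e).1, ← (ih x e).2]
      have hpair0 : refHom cs w (x, 0)
          = (w * x * w⁻¹, 0 + (refHom cs w (x, 0)).2) := by
        rw [← (ih x 0).1]
        rw [← (ih x 0).2]
      rw [hm, hm0, hpair, hpair0, refPerm_apply, refPerm_apply]
      constructor
      · show cs.simple i * (w * x * w⁻¹) * cs.simple i = cs.simple i * w * x * (cs.simple i * w)⁻¹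
        rw [mul_inv_rev, cs.inv_simple]
        group
      · dsimp only
        ring
  have h1 := (key w x e).1
  have h2 := (key w x e).2
  show refHom cs w (x, e) = _
  have : refHom cs w (x, e) = ((refHom cs w (x, e)).1, (refHom cs w (x, e)).2) := rfl
  rw [this, h1, h2]
  rfl

lemma eta_cocycle (a b x : W) :
    eta cs (a * b) x = eta cs b x + eta cs a (b * x * b⁻¹) := by
  have : refHom cs (a * b) (x, 0) = refHom cs a (refHom cs b (x, 0)) := by
    rw [map_mul]; rfl
  rw [refHom_apply, refHom_apply, refHom_apply] at this
  have := congrArg Prod.snd this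
  simpa [eta] using this

lemma eta_simple (i : B) (x : W) :
    eta cs (cs.simple i) x = if x = cs.simple i then 1 else 0 := by
  have : refHom cs (cs.simple i) (x, 0) = refPerm cs i (x, 0) := by rw [refHom_simple]
  rw [refPerm_apply] at this
  have h2 := congrArg Prod.snd this
  simpa [eta] using h2

lemma eta_one (x : W) : eta cs 1 x = 0 := by
  have : refHom cs (1 : W) (x, 0) = (x, 0) := by rw [map_one]; rfl
  simpa [eta] using congrArg Prod.snd this

lemma eta_refl_self {t : W} (ht : cs.IsReflection t) : eta cs t t = 1 := by
  obtain ⟨u, i, rfl⟩ := ht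
  set t := u * cs.simple i * u⁻¹ with hT
  have h1 : eta cs t t = eta cs (cs.simple i * u⁻¹) t
      + eta cs u ((cs.simple i * u⁻¹) * t * (cs.simple i * u⁻¹)⁻¹) := by
    have : t = u * (cs.simple i * u⁻¹) := by rw [hT]; group
    nth_rewrite 1 [this]
    rw [eta_cocycle]
  have hconj : u⁻¹ * t * (u⁻¹)⁻¹ = cs.simple i := by rw [hT]; group
  have h2 : eta cs (cs.simple i * u⁻¹) t = eta cs u⁻¹ t + 1 := by
    rw [eta_cocycle, hconj, eta_simple]
    simp
  have h3 : (cs.simple i * u⁻¹) * t * (cs.simple i * u⁻¹)⁻¹ = cs.simple i := by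
    rw [hT]
    rw [mul_inv_rev, cs.inv_simple]
    group
    rw [cs.simple_mul_simple_self, one_mul]
  have h4 : eta cs u⁻¹ t + eta cs u (cs.simple i) = 0 := by
    have : eta cs (u * u⁻¹) t = eta cs u⁻¹ t + eta cs u (u⁻¹ * t * (u⁻¹)⁻¹) := eta_cocycle cs u u⁻¹ t
    rw [mul_inv_cancel, eta_one, hconj] at this
    exact this.symm
  rw [h1, h2, h3]
  calc eta cs u⁻¹ t + 1 + eta cs u (cs.simple i)
      = (eta cs u⁻¹ t + eta cs u (cs.simple i)) + 1 := by ring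
    _ = 1 := by rw [h4, zero_add]

lemma zmod2_cases (x : ZMod 2) : x = 0 ∨ x = 1 := by revert x; decide

lemma mem_rightInvSeq_of_eta (ω : List B) (x : W)
    (h : eta cs (cs.wordProd ω) x = 1) : x ∈ cs.rightInvSeq ω := by
  induction ω with
  | nil =>
    rw [wordProd_nil, eta_one] at h
    exact absurd h (by decide)
  | cons i ω ih =>
    rw [cs.wordProd_cons, eta_cocycle, eta_simple] at h
    by_cases hx : cs.wordProd ω * x * (cs.wordProd ω)⁻¹ = cs.simple i
    · have : x = (cs.wordProd ω)⁻¹ * cs.simple i * cs.wordProd ω := by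
        rw [← hx]; group
      rw [this]
      show _ ∈ rightInvSeq cs (i :: ω)
      rw [rightInvSeq]
      exact List.mem_cons_self
    · rw [if_neg hx, add_zero] at h
      show x ∈ rightInvSeq cs (i :: ω)
      rw [rightInvSeq]
      exact List.mem_cons_of_mem _ (ih h)

lemma eta_eq_one_iff {w t : W} (ht : cs.IsReflection t) :
    eta cs w t = 1 ↔ cs.length (w * t) < cs.length w := by
  constructor
  · intro h
    obtain ⟨ω, hred, hw⟩ := cs.exists_reduced_word' w
    rw [hw] at h
    have hmem := mem_rightInvSeq_of_eta cs ω t h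
    obtain ⟨j, hj, hget⟩ := List.mem_iff_getElem.mp hmem
    rw [cs.length_rightInvSeq] at hj
    have hgetD : (cs.rightInvSeq ω).getD j 1 = t := by
      rw [List.getD_eq_getElem _ _ (by rw [cs.length_rightInvSeq]; exact hj)]
      exact hget
    have herase : cs.wordProd ω * t = cs.wordProd (ω.eraseIdx j) := by
      rw [← hgetD]
      exact cs.wordProd_mul_getD_rightInvSeq ω j
    rw [hw, herase]
    calc cs.length (cs.wordProd (ω.eraseIdx j)) ≤ (ω.eraseIdx j).length :=
          cs.length_wordProd_le _
      _ < ω.length := by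
          rw [List.length_eraseIdx]
          simp only [hj, if_pos]
          omega
      _ = cs.length (cs.wordProd ω) := hred.symm
  · intro hlt
    rcases zmod2_cases (eta cs w t) with h0 | h1
    · exfalso
      have he : eta cs (w * t) t = 1 := by
        rw [eta_cocycle]
        have : t * t * t⁻¹ = t := by rw [ht.mul_self, one_mul, ht.inv]
        rw [this, h0, add_zero, eta_refl_self cs ht]
      -- then length (w*t*t) < length (w*t), i.e. length w < length (w*t)
      have : cs.length (w * t * t) < cs.length (w * t) := by
        obtain ⟨ω, hred, hw⟩ := cs.exists_reduced_word' (w * t)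
        rw [hw] at he
        have hmem := mem_rightInvSeq_of_eta cs ω t he
        obtain ⟨j, hj, hget⟩ := List.mem_iff_getElem.mp hmem
        rw [cs.length_rightInvSeq] at hj
        have hgetD : (cs.rightInvSeq ω).getD j 1 = t := by
          rw [List.getD_eq_getElem _ _ (by rw [cs.length_rightInvSeq]; exact hj)]
          exact hget
        have herase : cs.wordProd ω * t = cs.wordProd (ω.eraseIdx j) := by
          rw [← hgetD]
          exact cs.wordProd_mul_getD_rightInvSeq ω j
        rw [hw, herase]
        calc cs.length (cs.wordProd (ω.eraseIdx j)) ≤ (ω.eraseIdx j).length :=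
              cs.length_wordProd_le _
          _ < ω.length := by
              rw [List.length_eraseIdx]
              simp only [hj, if_pos]
              omega
          _ = cs.length (cs.wordProd ω) := hred.symm
      rw [mul_assoc, ht.mul_self, mul_one] at this
      omega
    · exact h1

/-- Strong exchange property. -/
lemma strong_exchange {w t : W} (ht : cs.IsRightInversion w t) {ω : List B}
    (hred : cs.IsReduced ω) (hw : w = cs.wordProd ω) :
    ∃ j < ω.length, w * t = cs.wordProd (ω.eraseIdx j) := by
  have h1 : eta cs w t = 1 := (eta_eq_one_iff cs ht.1).mpr ht.2
  rw [hw] at h1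
  have hmem := mem_rightInvSeq_of_eta cs ω t h1
  obtain ⟨j, hj, hget⟩ := List.mem_iff_getElem.mp hmem
  rw [cs.length_rightInvSeq] at hj
  refine ⟨j, hj, ?_⟩
  have hgetD : (cs.rightInvSeq ω).getD j 1 = t := by
    rw [List.getD_eq_getElem _ _ (by rw [cs.length_rightInvSeq]; exact hj)]
    exact hget
  rw [hw, ← hgetD]
  exact cs.wordProd_mul_getD_rightInvSeq ω j



open CoxeterSystem

variable {B W : Type*} [Group W] {M : CoxeterMatrix B}

variable (cs : CoxeterSystem M W)

lemma bruhatLE_refl (w : W) : BruhatLE cs w w := Relation.ReflTransGen.refl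

lemma bruhatLE_trans {u v w : W} (h1 : BruhatLE cs u v) (h2 : BruhatLE cs v w) :
    BruhatLE cs u w := Relation.ReflTransGen.trans h1 h2

lemma length_le_of_bruhatLE {v w : W} (h : BruhatLE cs v w) :
    cs.length v ≤ cs.length w := by
  induction h with
  | refl => exact le_refl _
  | tail _ h2 ih =>
    have := h2.2
    omega

lemma simple_mul_ascent_iff (i : B) (v : W) :
    cs.length v < cs.length (cs.simple i * v) ↔
      cs.length (cs.simple i * v) = cs.length v + 1 := by
  rcases cs.length_simple_mul v i with h | h <;> omega

lemma simple_mul_descent_iff (i : B) (v : W) :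
    cs.length (cs.simple i * v) < cs.length v ↔
      cs.length v = cs.length (cs.simple i * v) + 1 := by
  rcases cs.length_simple_mul v i with h | h <;> omega

lemma bruhatCov_simple_mul_right {i : B} {v : W}
    (h : cs.length v < cs.length (cs.simple i * v)) :
    BruhatCov cs v (cs.simple i * v) := by
  constructor
  · refine ⟨v⁻¹ * cs.simple i * v, ⟨v⁻¹, i, by group⟩, by group⟩
  · exact (simple_mul_ascent_iff cs i v).mp h

lemma bruhatCov_simple_mul_left {i : B} {v : W}
    (h : cs.length (cs.simple i * v) < cs.length v) :
    BruhatCov cs (cs.simple i * v) v := by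
  constructor
  · refine ⟨v⁻¹ * cs.simple i * v, ⟨v⁻¹, i, by group⟩, ?_⟩
    calc v = cs.simple i * (cs.simple i * v) := by
            rw [cs.simple_mul_simple_cancel_left]
      _ = cs.simple i * v * (v⁻¹ * cs.simple i * v) := by group
  · have h2 := (simple_mul_descent_iff cs i v).mp h
    omega

/-- Core exchange lemma for covers. -/
lemma core_cover {i : B} {v w t : W} (ht : cs.IsReflection t) (hvw : w = v * t)
    (hcov : cs.length w = cs.length v + 1)
    (hw : cs.length (cs.simple i * w) < cs.length w)
    (hv : cs.length v < cs.length (cs.simple i * v)) :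
    cs.simple i * v = w := by
  obtain ⟨ω₁, hred₁, heq₁⟩ := cs.exists_reduced_word' (cs.simple i * w)
  have hlw : cs.length w = cs.length (cs.simple i * w) + 1 :=
    (simple_mul_descent_iff cs i w).mp hw
  have hπ : cs.wordProd (i :: ω₁) = w := by
    rw [cs.wordProd_cons, ← heq₁, cs.simple_mul_simple_cancel_left]
  have hredω : cs.IsReduced (i :: ω₁) := by
    show cs.length (cs.wordProd (i :: ω₁)) = _
    rw [hπ, List.length_cons, ← hred₁, ← heq₁]
    exact hlw
  have hinv : cs.IsRightInversion w t := by
    refine ⟨ht, ?_⟩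
    have : w * t = v := by rw [hvw, mul_assoc, ht.mul_self, mul_one]
    rw [this]
    omega
  obtain ⟨j, hj, hex⟩ := strong_exchange cs hinv hredω hπ.symm
  have hwt : w * t = v := by rw [hvw, mul_assoc, ht.mul_self, mul_one]
  rw [hwt] at hex
  match j with
  | 0 =>
    rw [List.eraseIdx_cons_zero, ← heq₁] at hex
    rw [hex, cs.simple_mul_simple_cancel_left]
  | (k+1) =>
    exfalso
    rw [List.eraseIdx_cons_succ] at hex
    have hsv : cs.simple i * v = cs.wordProd (ω₁.eraseIdx k) := by
      rw [hex, cs.wordProd_cons, cs.simple_mul_simple_cancel_left]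
    have hlen1 : cs.length (cs.simple i * v) ≤ (ω₁.eraseIdx k).length := by
      rw [hsv]; exact cs.length_wordProd_le _
    have hlen2 : (ω₁.eraseIdx k).length ≤ ω₁.length :=
      (List.eraseIdx_sublist ω₁ k).length_le
    have hlv : cs.length (cs.simple i * v) = cs.length v + 1 :=
      (simple_mul_ascent_iff cs i v).mp hv
    have hω₁ : ω₁.length = cs.length w - 1 := by
      rw [← hred₁, ← heq₁]; omega
    omega

/-- `bmax i v` is the larger of `v` and `s_i v`. -/
noncomputable def bmax (i : B) (v : W) : W :=
  if cs.length v < cs.length (cs.simple i * v) then cs.simple i * v else v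

/-- `bmin i v` is the smaller of `v` and `s_i v`. -/
noncomputable def bmin (i : B) (v : W) : W :=
  if cs.length (cs.simple i * v) < cs.length v then cs.simple i * v else v

lemma not_ascent {i : B} {v : W} (h : ¬ cs.length v < cs.length (cs.simple i * v)) :
    cs.length (cs.simple i * v) < cs.length v := by
  rcases cs.length_simple_mul v i with h' | h' <;> omega

lemma bmax_cov {i : B} {v w : W} (hcov : BruhatCov cs v w) :
    BruhatLE cs (bmax cs i v) (bmax cs i w) := by
  obtain ⟨⟨t, ht, hvw⟩, hlen⟩ := hcov
  unfold bmax
  by_cases hv : cs.length v < cs.length (cs.simple i * v) <;>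
    by_cases hw : cs.length w < cs.length (cs.simple i * w)
  · -- ascent, ascent : s v ⋖ s w
    rw [if_pos hv, if_pos hw]
    apply Relation.ReflTransGen.single
    constructor
    · exact ⟨t, ht, by rw [hvw]; group⟩
    · have h1 := (simple_mul_ascent_iff cs i v).mp hv
      have h2 := (simple_mul_ascent_iff cs i w).mp hw
      omega
  · -- ascent, descent : s v = w
    rw [if_pos hv, if_neg hw]
    have := core_cover cs ht hvw hlen (not_ascent cs hw) hv
    rw [this]
    exact Relation.ReflTransGen.refl
  · -- descent, ascent : v ⋖ w ⋖ s w
    rw [if_neg hv, if_pos hw]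
    refine Relation.ReflTransGen.tail (Relation.ReflTransGen.single ⟨⟨t, ht, hvw⟩, hlen⟩) ?_
    exact bruhatCov_simple_mul_right cs hw
  · -- descent, descent : v ⋖ w
    rw [if_neg hv, if_neg hw]
    exact Relation.ReflTransGen.single ⟨⟨t, ht, hvw⟩, hlen⟩

lemma bmin_cov {i : B} {v w : W} (hcov : BruhatCov cs v w) :
    BruhatLE cs (bmin cs i v) (bmin cs i w) := by
  obtain ⟨⟨t, ht, hvw⟩, hlen⟩ := hcov
  unfold bmin
  by_cases hv : cs.length (cs.simple i * v) < cs.length v <;>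
    by_cases hw : cs.length (cs.simple i * w) < cs.length w
  · -- descent, descent : s v ⋖ s w
    rw [if_pos hv, if_pos hw]
    apply Relation.ReflTransGen.single
    constructor
    · exact ⟨t, ht, by rw [hvw]; group⟩
    · have h1 := (simple_mul_descent_iff cs i v).mp hv
      have h2 := (simple_mul_descent_iff cs i w).mp hw
      omega
  · -- descent v, ascent w : s v ⋖ v ⋖ w
    rw [if_pos hv, if_neg hw]
    refine Relation.ReflTransGen.head (bruhatCov_simple_mul_left cs hv) ?_
    exact Relation.ReflTransGen.single ⟨⟨t, ht, hvw⟩, hlen⟩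
  · -- ascent v, descent w : s v = w so v = s w
    rw [if_neg hv, if_pos hw]
    have hasc : cs.length v < cs.length (cs.simple i * v) := by
      rcases cs.length_simple_mul v i with h' | h' <;> omega
    have := core_cover cs ht hvw hlen hw hasc
    have hv_eq : v = cs.simple i * w := by
      rw [← this, cs.simple_mul_simple_cancel_left]
    rw [← hv_eq]
    exact Relation.ReflTransGen.refl
  · -- ascent, ascent : v ⋖ w
    rw [if_neg hv, if_neg hw]
    exact Relation.ReflTransGen.single ⟨⟨t, ht, hvw⟩, hlen⟩

lemma bmax_le {i : B} {v w : W} (h : BruhatLE cs v w) :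
    BruhatLE cs (bmax cs i v) (bmax cs i w) := by
  induction h with
  | refl => exact bruhatLE_refl cs _
  | tail _ h2 ih => exact bruhatLE_trans cs ih (bmax_cov cs h2)

lemma bmin_le {i : B} {v w : W} (h : BruhatLE cs v w) :
    BruhatLE cs (bmin cs i v) (bmin cs i w) := by
  induction h with
  | refl => exact bruhatLE_refl cs _
  | tail _ h2 ih => exact bruhatLE_trans cs ih (bmin_cov cs h2)

lemma bmax_eq_of_ascent {i : B} {v : W} (h : cs.length v < cs.length (cs.simple i * v)) :
    bmax cs i v = cs.simple i * v := if_pos h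

lemma bmax_eq_of_descent {i : B} {v : W} (h : cs.length (cs.simple i * v) < cs.length v) :
    bmax cs i v = v := if_neg (by omega)

lemma bmin_eq_of_ascent {i : B} {v : W} (h : cs.length v < cs.length (cs.simple i * v)) :
    bmin cs i v = v := if_neg (by omega)

lemma bmin_eq_of_descent {i : B} {v : W} (h : cs.length (cs.simple i * v) < cs.length v) :
    bmin cs i v = cs.simple i * v := if_pos h

/-- The left lifting property, packaged. -/
lemma lift_descent_le {i : B} {v w : W}
    (hv : cs.length (cs.simple i * v) < cs.length v)
    (hw : cs.length (cs.simple i * w) < cs.length w)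
    (h : BruhatLE cs v w) : BruhatLE cs (cs.simple i * v) (cs.simple i * w) := by
  have := bmin_le cs (i := i) h
  rwa [bmin_eq_of_descent cs hv, bmin_eq_of_descent cs hw] at this

lemma lift_mixed_le {i : B} {v w : W}
    (hv : cs.length v < cs.length (cs.simple i * v))
    (hw : cs.length (cs.simple i * w) < cs.length w)
    (h : BruhatLE cs v w) : BruhatLE cs v (cs.simple i * w) := by
  have := bmin_le cs (i := i) h
  rwa [bmin_eq_of_ascent cs hv, bmin_eq_of_descent cs hw] at this

lemma lift_max_le {i : B} {v w : W}
    (hw : cs.length (cs.simple i * w) < cs.length w)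
    (h : BruhatLE cs (cs.simple i * v) w) (hv : cs.length (cs.simple i * v) < cs.length v) :
    BruhatLE cs v w := by
  have := bmax_le cs (i := i) h
  rw [bmax_eq_of_descent cs hw] at this
  have hvv : bmax cs i (cs.simple i * v) = v := by
    unfold bmax
    rw [cs.simple_mul_simple_cancel_left]
    exact if_pos hv
  rwa [hvv] at this



open CoxeterSystem

variable {B W : Type*} [Group W] {M : CoxeterMatrix B}

variable (cs : CoxeterSystem M W)

section ListAux

private lemma eraseIdx_append_left' {α : Type*} (l r : List α) (k : ℕ) (h : k < l.length) :
    (l ++ r).eraseIdx k = l.eraseIdx k ++ r := by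
  induction l generalizing k with
  | nil => simp at h
  | cons a l ih =>
    match k with
    | 0 => rfl
    | k+1 =>
      simp only [List.cons_append, List.eraseIdx_cons_succ]
      rw [ih k (by simpa using h)]

private lemma eraseIdx_append_right' {α : Type*} (l r : List α) (k : ℕ) (h : l.length ≤ k) :
    (l ++ r).eraseIdx k = l ++ r.eraseIdx (k - l.length) := by
  induction l generalizing k with
  | nil => simp
  | cons a l ih =>
    match k with
    | 0 => simp at h
    | k+1 =>
      simp only [List.cons_append, List.eraseIdx_cons_succ]
      rw [ih k (by simpa using h)]
      simp

end ListAux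

/-- Every element of `W_J` is a product of simple reflections with indices in `J`. -/
lemma exists_J_word {J : Set B} {v : W} (hv : v ∈ WJ cs J) :
    ∃ ω : List B, (∀ j ∈ ω, j ∈ J) ∧ cs.wordProd ω = v := by
  induction hv using Subgroup.closure_induction with
  | mem x hx =>
    obtain ⟨j, hj, rfl⟩ := hx
    exact ⟨[j], by simpa using hj, cs.wordProd_singleton j⟩
  | one => exact ⟨[], by simp, cs.wordProd_nil⟩
  | mul x y _ _ ihx ihy =>
    obtain ⟨ω₁, h₁, rfl⟩ := ihx
    obtain ⟨ω₂, h₂, rfl⟩ := ihy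
    exact ⟨ω₁ ++ ω₂, by
      intro j hj
      rcases List.mem_append.mp hj with h | h
      exacts [h₁ j h, h₂ j h], cs.wordProd_append ω₁ ω₂⟩
  | inv x _ ih =>
    obtain ⟨ω, h, rfl⟩ := ih
    exact ⟨ω.reverse, fun j hj => h j (List.mem_reverse.mp hj), cs.wordProd_reverse ω⟩

lemma wordProd_mem_WJ {J : Set B} {ω : List B} (h : ∀ j ∈ ω, j ∈ J) :
    cs.wordProd ω ∈ WJ cs J := by
  induction ω with
  | nil => rw [cs.wordProd_nil]; exact one_mem _
  | cons i ω ih =>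
    rw [cs.wordProd_cons]
    exact mul_mem (Subgroup.subset_closure ⟨i, h i (List.mem_cons_self (a := i) (l := ω)), rfl⟩)
      (ih fun j hj => h j (List.mem_cons_of_mem i hj))

lemma simple_mem_WJ {J : Set B} {j : B} (hj : j ∈ J) : cs.simple j ∈ WJ cs J :=
  Subgroup.subset_closure ⟨j, hj, rfl⟩

/-- Deletion: a non-reduced word has a shorter sublist with the same product. -/
lemma deletion {ω : List B} (h : ¬ cs.IsReduced ω) :
    ∃ ω' : List B, ω'.Sublist ω ∧ ω'.length < ω.length ∧ cs.wordProd ω' = cs.wordProd ω := by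
  induction ω with
  | nil => exact absurd (by simp [CoxeterSystem.IsReduced]) h
  | cons i ω₁ ih =>
    by_cases h₁ : cs.IsReduced ω₁
    · -- i is a left descent of π ω₁
      have hne := cs.length_simple_mul (cs.wordProd ω₁) i
      have hlt : cs.length (cs.simple i * cs.wordProd ω₁) + 1 = cs.length (cs.wordProd ω₁) := by
        rcases hne with h' | h'
        · exfalso
          apply h
          show cs.length (cs.wordProd (i :: ω₁)) = _
          rw [cs.wordProd_cons, h', h₁]
          simp
        · exact h'
      -- right inversion of the inverse
      have hinv : cs.IsRightInversion (cs.wordProd ω₁)⁻¹ (cs.simple i) := by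
        refine ⟨cs.isReflection_simple i, ?_⟩
        have : ((cs.wordProd ω₁)⁻¹ * cs.simple i)⁻¹ = cs.simple i * cs.wordProd ω₁ := by
          rw [mul_inv_rev, cs.inv_simple, inv_inv]
        calc cs.length ((cs.wordProd ω₁)⁻¹ * cs.simple i)
            = cs.length (cs.simple i * cs.wordProd ω₁) := by rw [← cs.length_inv, this]
          _ < cs.length (cs.wordProd ω₁) := by omega
          _ = cs.length (cs.wordProd ω₁)⁻¹ := (cs.length_inv _).symm
      have hrev : (cs.wordProd ω₁)⁻¹ = cs.wordProd ω₁.reverse := (cs.wordProd_reverse ω₁).symm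
      have hredrev : cs.IsReduced ω₁.reverse := (cs.isReduced_reverse_iff ω₁).mpr h₁
      obtain ⟨j, hj, hex⟩ := strong_exchange cs hinv hredrev hrev
      refine ⟨(ω₁.reverse.eraseIdx j).reverse, ?_, ?_, ?_⟩
      · refine List.Sublist.trans ?_ (List.sublist_cons_self i ω₁)
        have : (ω₁.reverse.eraseIdx j).Sublist ω₁.reverse := List.eraseIdx_sublist _ _
        simpa using this.reverse
      · have : (ω₁.reverse.eraseIdx j).length < ω₁.reverse.length := by
          rw [List.length_eraseIdx]
          simp only [hj, if_pos]
          have : j < ω₁.reverse.length := hj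
          omega
        simp only [List.length_reverse] at this ⊢
        simp [List.length_reverse]
        omega
      · have : cs.wordProd ((ω₁.reverse.eraseIdx j).reverse)
            = (cs.wordProd (ω₁.reverse.eraseIdx j))⁻¹ := cs.wordProd_reverse _
        rw [this, ← hex, cs.wordProd_cons]
        rw [mul_inv_rev, cs.inv_simple, inv_inv]
    · obtain ⟨ω', hsub, hlen, hprod⟩ := ih h₁
      exact ⟨i :: ω', List.Sublist.cons₂ i hsub, by simpa using hlen,
        by rw [cs.wordProd_cons, cs.wordProd_cons, hprod]⟩

/-- Every element of `W_J` has a reduced word with letters in `J`. -/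
lemma exists_reduced_J_word {J : Set B} {v : W} (hv : v ∈ WJ cs J) :
    ∃ ω : List B, (∀ j ∈ ω, j ∈ J) ∧ cs.IsReduced ω ∧ cs.wordProd ω = v := by
  obtain ⟨ω, hω, hprod⟩ := exists_J_word cs hv
  clear hv
  suffices H : ∀ (n : ℕ) (ω : List B), ω.length = n → (∀ j ∈ ω, j ∈ J) → cs.wordProd ω = v →
      ∃ ω : List B, (∀ j ∈ ω, j ∈ J) ∧ cs.IsReduced ω ∧ cs.wordProd ω = v by
    exact H ω.length ω rfl hω hprod
  intro n
  induction n using Nat.strong_induction_on with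
  | _ n ih =>
    intro ω hn hω hprod
    by_cases hred : cs.IsReduced ω
    · exact ⟨ω, hω, hred, hprod⟩
    · obtain ⟨ω', hsub, hlen, hprod'⟩ := deletion cs hred
      exact ih ω'.length (by omega) ω' rfl (fun j hj => hω j (hsub.mem hj))
        (by rw [hprod', hprod])

/-- Existence of the parabolic decomposition. -/
lemma minrep_decomp (J : Set B) (w : W) :
    ∃ u v : W, u ∈ MinRep cs J ∧ v ∈ WJ cs J ∧ w = u * v ∧
      cs.length w = cs.length u + cs.length v := by
  suffices H : ∀ (n : ℕ) (w : W), cs.length w = n →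
      ∃ u v : W, u ∈ MinRep cs J ∧ v ∈ WJ cs J ∧ w = u * v ∧
        cs.length w = cs.length u + cs.length v by
    exact H (cs.length w) w rfl
  intro n
  induction n using Nat.strong_induction_on with
  | _ n ih =>
    intro w hn
    by_cases hw : w ∈ MinRep cs J
    · exact ⟨w, 1, hw, one_mem _, by simp, by simp⟩
    · simp only [MinRep, Set.mem_setOf_eq, not_forall] at hw
      obtain ⟨j, hjJ, hj⟩ := hw
      have hdesc : cs.length (w * cs.simple j) + 1 = cs.length w := by
        rcases cs.length_mul_simple w j with h' | h' <;> omega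
      obtain ⟨u, v, hu, hv, heq, hlen⟩ :=
        ih (cs.length (w * cs.simple j)) (by omega) (w * cs.simple j) rfl
      refine ⟨u, v * cs.simple j, hu, mul_mem hv (simple_mem_WJ cs hjJ), ?_, ?_⟩
      · rw [← mul_assoc, ← heq, cs.simple_mul_simple_cancel_right]
      · have h1 : cs.length (v * cs.simple j) ≤ cs.length v + 1 := by
          have := cs.length_mul_le v (cs.simple j)
          rwa [cs.length_simple] at this
        have h2 : cs.length w ≤ cs.length u + cs.length (v * cs.simple j) := by
          have : w = u * (v * cs.simple j) := by
            rw [← mul_assoc, ← heq, cs.simple_mul_simple_cancel_right]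
          rw [this]
          exact cs.length_mul_le u (v * cs.simple j)
        omega

/-- Key lemma: lengths add in the parabolic decomposition. -/
lemma minrep_mul_length {J : Set B} :
    ∀ {u : W}, u ∈ MinRep cs J → ∀ {v : W}, v ∈ WJ cs J →
      cs.length (u * v) = cs.length u + cs.length v := by
  suffices H : ∀ (n : ℕ) (u : W), cs.length u = n → u ∈ MinRep cs J →
      ∀ v : W, v ∈ WJ cs J → cs.length (u * v) = cs.length u + cs.length v by
    intro u hu v hv
    exact H (cs.length u) u rfl hu v hv
  intro n
  induction n using Nat.strong_induction_on with
  | _ n ihn =>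
    intro u hnu hu v hv
    obtain ⟨β, hβJ, hβred, hβprod⟩ := exists_reduced_J_word cs hv
    subst hnu
    -- inner induction on the reduced J-word β
    have inner : ∀ (β : List B), (∀ j ∈ β, j ∈ J) → cs.IsReduced β →
        cs.length (u * cs.wordProd β) = cs.length u + β.length := by
      intro β
      induction β using List.reverseRecOn with
      | nil => intro _ _; simp
      | append_singleton β' j ihβ =>
        intro hJ hred
        have hβ'J : ∀ j' ∈ β', j' ∈ J := fun j' hj' => hJ j' (List.mem_append_left _ hj')
        have hjJ : j ∈ J := hJ j (by simp)
        have hβ'red : cs.IsReduced β' := by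
          have := hred.take β'.length
          rwa [List.take_left] at this
        have ihv : cs.length (u * cs.wordProd β') = cs.length u + β'.length := ihβ hβ'J hβ'red
        set v' := cs.wordProd β' with hv'
        have hprodβ : cs.wordProd (β' ++ [j]) = v' * cs.simple j := by
          rw [cs.wordProd_append, cs.wordProd_singleton]
        rw [hprodβ, List.length_append, List.length_singleton, ← mul_assoc]
        rcases cs.length_mul_simple (u * v') j with hcase | hcase
        · omega
        · -- contradiction branch
          exfalso
          have hinv : cs.IsRightInversion (u * v') (cs.simple j) :=
            ⟨cs.isReflection_simple j, by omega⟩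
          obtain ⟨α, hαred, hαprod⟩ := cs.exists_reduced_word' u
          have hlu : cs.length u = α.length := by rw [hαprod, hαred]
          have hαβred : cs.IsReduced (α ++ β') := by
            show cs.length (cs.wordProd (α ++ β')) = _
            rw [cs.wordProd_append, ← hαprod, ← hv', List.length_append, ihv, hlu]
          have hαβprod : u * v' = cs.wordProd (α ++ β') := by
            rw [cs.wordProd_append, ← hαprod]
          obtain ⟨k, hk, hex⟩ := strong_exchange cs hinv hαβred hαβprod
          rw [List.length_append] at hk
          by_cases hkα : k < α.length
          · -- deleted letter in α: contradiction with u being a minimal rep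
            rw [eraseIdx_append_left' α β' k hkα] at hex
            set u' := cs.wordProd (α.eraseIdx k) with hu'
            have hexu : u * v' * cs.simple j = u' * v' := by
              rw [hex, cs.wordProd_append]
            have hu'short : cs.length u' ≤ cs.length u - 1 := by
              have h1 : cs.length u' ≤ (α.eraseIdx k).length := cs.length_wordProd_le _
              have h2 : (α.eraseIdx k).length + 1 = α.length := by
                rw [List.length_eraseIdx]
                simp only [hkα, if_pos]
                omega
              omega
            have hu'lt : cs.length u' < cs.length u := by
              have hαpos : 0 < α.length := by omega
              omega
            -- decompose u'
            obtain ⟨u₀, m, hu₀, hm, hdecomp, hlen₀⟩ := minrep_decomp cs J u'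
            have hrw : u = u₀ * (m * (v' * cs.simple j * v'⁻¹)) := by
              have : u = u' * (v' * cs.simple j * v'⁻¹) := by
                have h5 : u * v' * cs.simple j * v'⁻¹ = u' * v' * v'⁻¹ := by rw [hexu]
                rw [mul_inv_cancel_right] at h5
                rw [← h5]
                simp [mul_assoc, cs.simple_mul_simple_cancel_left]
              rw [this, hdecomp, mul_assoc]
            have hvJ' : v' ∈ WJ cs J := wordProd_mem_WJ cs hβ'J
            have hnJ : m * (v' * cs.simple j * v'⁻¹) ∈ WJ cs J := by
              refine mul_mem hm (mul_mem (mul_mem hvJ' (simple_mem_WJ cs hjJ)) ?_)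
              exact inv_mem hvJ'
            set nn := m * (v' * cs.simple j * v'⁻¹) with hnn
            have hu₀lt : cs.length u₀ < cs.length u := by omega
            have hlenu : cs.length u = cs.length u₀ + cs.length nn := by
              rw [hrw]
              exact ihn (cs.length u₀) hu₀lt u₀ rfl hu₀ nn hnJ
            have hnn1 : nn ≠ 1 := by
              intro h1
              rw [h1, mul_one] at hrw
              subst hrw
              omega
            obtain ⟨γ, hγJ, hγred, hγprod⟩ := exists_reduced_J_word cs hnJ
            have hγne : γ ≠ [] := by
              intro h0
              apply hnn1
              rw [← hγprod, h0, cs.wordProd_nil]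
            obtain ⟨γ', j', hγ'⟩ := (List.eq_nil_or_concat γ).resolve_left hγne
            have hj'J : j' ∈ J := hγJ j' (by rw [hγ']; simp)
            have hns : nn * cs.simple j' = cs.wordProd γ' := by
              rw [← hγprod, hγ', List.concat_eq_append, cs.wordProd_append,
                cs.wordProd_singleton, mul_assoc, cs.simple_mul_simple_self, mul_one]
            have hnslen : cs.length (nn * cs.simple j') < cs.length nn := by
              have h1 : cs.length (nn * cs.simple j') ≤ γ'.length := by
                rw [hns]; exact cs.length_wordProd_le _
              have h2 : γ'.length + 1 = γ.length := by rw [hγ']; simp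
              have h3 : γ.length = cs.length nn := by rw [← hγprod, hγred]
              omega
            have hmem : nn * cs.simple j' ∈ WJ cs J :=
              mul_mem hnJ (simple_mem_WJ cs hj'J)
            have : cs.length (u * cs.simple j') = cs.length u₀ + cs.length (nn * cs.simple j') := by
              have : u * cs.simple j' = u₀ * (nn * cs.simple j') := by
                rw [hrw]; group
              rw [this]
              exact ihn (cs.length u₀) hu₀lt u₀ rfl hu₀ _ hmem
            have hmin := hu j' hj'J
            omega
          · -- deleted letter in β': contradiction with β reduced
            rw [eraseIdx_append_right' α β' k (by omega)] at hex
            have : v' * cs.simple j = cs.wordProd (β'.eraseIdx (k - α.length)) := by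
              have := hex
              rw [cs.wordProd_append, ← hαprod] at this
              rw [mul_assoc] at this
              exact mul_left_cancel this
            have h1 : cs.length (v' * cs.simple j) ≤ (β'.eraseIdx (k - α.length)).length := by
              rw [this]; exact cs.length_wordProd_le _
            have h2 : (β'.eraseIdx (k - α.length)).length ≤ β'.length :=
              (List.eraseIdx_sublist _ _).length_le
            have h3 : cs.length (v' * cs.simple j) = β'.length + 1 := by
              rw [← hprodβ, hred]
              simp
            omega
    rw [← hβprod, inner β hβJ hβred, hβred]

/-- Uniqueness of the minimal coset representative. -/
lemma minrep_unique {J : Set B} {u u' : W} (hu : u ∈ MinRep cs J) (hu' : u' ∈ MinRep cs J)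
    (h : u⁻¹ * u' ∈ WJ cs J) : u = u' := by
  have h1 : u' = u * (u⁻¹ * u') := by group
  have h2 : u = u' * (u⁻¹ * u')⁻¹ := by group
  have l1 : cs.length u' = cs.length u + cs.length (u⁻¹ * u') := by
    calc cs.length u' = cs.length (u * (u⁻¹ * u')) := by rw [mul_inv_cancel_left]
      _ = _ := minrep_mul_length cs hu h
  have l2 : cs.length u = cs.length u' + cs.length (u⁻¹ * u') := by
    calc cs.length u = cs.length (u' * (u⁻¹ * u')⁻¹) := by
          rw [mul_inv_rev, inv_inv, mul_inv_cancel_left]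
      _ = cs.length u' + cs.length (u⁻¹ * u')⁻¹ := minrep_mul_length cs hu' (inv_mem h)
      _ = _ := by rw [cs.length_inv]
  have h0 : cs.length (u⁻¹ * u') = 0 := by omega
  have h0' : u⁻¹ * u' = 1 := cs.length_eq_zero_iff.mp h0
  exact inv_mul_eq_one.mp h0'



end KMChev


namespace KMChev

open CoxeterSystem

variable {B W : Type*} [Group W] {M : CoxeterMatrix B} (cs : CoxeterSystem M W)

lemma mul_simple_ascent_iff (j : B) (v : W) :
    cs.length v < cs.length (v * cs.simple j) ↔
      cs.length (v * cs.simple j) = cs.length v + 1 := by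
  rcases cs.length_mul_simple v j with h | h <;> omega

lemma mul_simple_descent_iff (j : B) (v : W) :
    cs.length (v * cs.simple j) < cs.length v ↔
      cs.length v = cs.length (v * cs.simple j) + 1 := by
  rcases cs.length_mul_simple v j with h | h <;> omega

lemma bruhatCov_inv {v w : W} (h : BruhatCov cs v w) : BruhatCov cs v⁻¹ w⁻¹ := by
  obtain ⟨⟨t, ht, rfl⟩, hlen⟩ := h
  refine ⟨⟨v * t * v⁻¹, ht.conj v, ?_⟩, ?_⟩
  · rw [mul_inv_rev, ht.inv]
    simp [mul_assoc]
  · rw [cs.length_inv, cs.length_inv]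
    exact hlen

lemma bruhatLE_inv {v w : W} (h : BruhatLE cs v w) : BruhatLE cs v⁻¹ w⁻¹ := by
  induction h with
  | refl => exact Relation.ReflTransGen.refl
  | tail _ h2 ih => exact Relation.ReflTransGen.tail ih (bruhatCov_inv cs h2)

/-- Right-handed mixed lifting: `v ≤ w`, `v s_j > v`, `w s_j < w` implies `v ≤ w s_j`. -/
lemma lift_mixed_le_right {j : B} {v w : W}
    (hv : cs.length v < cs.length (v * cs.simple j))
    (hw : cs.length (w * cs.simple j) < cs.length w)
    (h : BruhatLE cs v w) : BruhatLE cs v (w * cs.simple j) := by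
  have h' : BruhatLE cs v⁻¹ w⁻¹ := bruhatLE_inv cs h
  have hv' : cs.length v⁻¹ < cs.length (cs.simple j * v⁻¹) := by
    have : cs.simple j * v⁻¹ = (v * cs.simple j)⁻¹ := by
      rw [mul_inv_rev, cs.inv_simple]
    rw [this, cs.length_inv, cs.length_inv]
    exact hv
  have hw' : cs.length (cs.simple j * w⁻¹) < cs.length w⁻¹ := by
    have : cs.simple j * w⁻¹ = (w * cs.simple j)⁻¹ := by
      rw [mul_inv_rev, cs.inv_simple]
    rw [this, cs.length_inv, cs.length_inv]
    exact hw
  have := lift_mixed_le cs hv' hw' h'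
  have h2 := bruhatLE_inv cs this
  rw [inv_inv] at h2
  have : (cs.simple j * w⁻¹)⁻¹ = w * cs.simple j := by
    rw [mul_inv_rev, cs.inv_simple, inv_inv]
  rwa [this] at h2

/-! ### Minimal coset representatives -/

lemma exists_minrep (J : Set B) (σ : W ⧸ WJ cs J) :
    ∃ u, u ∈ MinRep cs J ∧ (QuotientGroup.mk u : W ⧸ WJ cs J) = σ := by
  obtain ⟨x, rfl⟩ := QuotientGroup.mk_surjective σ
  obtain ⟨u, v, hu, hv, rfl, _⟩ := minrep_decomp cs J x
  refine ⟨u, hu, ?_⟩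
  symm
  rw [QuotientGroup.eq]
  simpa using inv_mem hv

noncomputable def mr (J : Set B) (σ : W ⧸ WJ cs J) : W :=
  (exists_minrep cs J σ).choose

lemma mr_mem (J : Set B) (σ : W ⧸ WJ cs J) : mr cs J σ ∈ MinRep cs J :=
  (exists_minrep cs J σ).choose_spec.1

lemma mr_mk (J : Set B) (σ : W ⧸ WJ cs J) :
    (QuotientGroup.mk (mr cs J σ) : W ⧸ WJ cs J) = σ :=
  (exists_minrep cs J σ).choose_spec.2

lemma mr_eq {J : Set B} {u : W} (hu : u ∈ MinRep cs J) :
    mr cs J (QuotientGroup.mk u) = u := by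
  apply minrep_unique cs (mr_mem cs J _) hu
  rw [← QuotientGroup.eq]
  exact mr_mk cs J _

lemma cosetLE_iff (J : Set B) (σ τ : W ⧸ WJ cs J) :
    CosetLE cs J σ τ ↔ BruhatLE cs (mr cs J σ) (mr cs J τ) := by
  constructor
  · rintro ⟨v, w, hv, hw, rfl, rfl, hle⟩
    rwa [mr_eq cs hv, mr_eq cs hw]
  · intro h
    exact ⟨mr cs J σ, mr cs J τ, mr_mem cs J σ, mr_mem cs J τ, mr_mk cs J σ, mr_mk cs J τ, h⟩

lemma mk_smul (J : Set B) (g x : W) :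
    (g • (QuotientGroup.mk x : W ⧸ WJ cs J)) = QuotientGroup.mk (g * x) := rfl

lemma minrep_simple_descent {J : Set B} {i : B} {u : W} (hu : u ∈ MinRep cs J)
    (h : cs.length (cs.simple i * u) < cs.length u) :
    cs.simple i * u ∈ MinRep cs J := by
  intro j hj
  have h1 : cs.length (u * cs.simple j) = cs.length u + 1 :=
    (mul_simple_ascent_iff cs j u).mp (hu j hj)
  have h2 : cs.length u = cs.length (cs.simple i * u) + 1 :=
    (simple_mul_descent_iff cs i u).mp h
  have h3 : cs.simple i * u * cs.simple j = cs.simple i * (u * cs.simple j) := by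
    rw [mul_assoc]
  rw [h3]
  rcases cs.length_simple_mul (u * cs.simple j) i with h' | h' <;> omega

lemma minrep_exchange {J : Set B} {i : B} {u : W} (hu : u ∈ MinRep cs J)
    (hasc : cs.length u < cs.length (cs.simple i * u))
    (hnot : cs.simple i * u ∉ MinRep cs J) :
    ∃ j ∈ J, cs.simple i * u = u * cs.simple j := by
  simp only [MinRep, Set.mem_setOf_eq, not_forall] at hnot
  obtain ⟨j, hjJ, hj⟩ := hnot
  have hdesc : cs.length (cs.simple i * u * cs.simple j) < cs.length (cs.simple i * u) := by
    rcases cs.length_mul_simple (cs.simple i * u) j with h' | h' <;> omega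
  have hinv : cs.IsRightInversion (cs.simple i * u) (cs.simple j) :=
    ⟨cs.isReflection_simple j, hdesc⟩
  obtain ⟨α, hαred, hαprod⟩ := cs.exists_reduced_word' u
  have hcons_red : cs.IsReduced (i :: α) := by
    show cs.length (cs.wordProd (i :: α)) = _
    rw [cs.wordProd_cons, ← hαprod, List.length_cons]
    have h1 : cs.length (cs.simple i * u) = cs.length u + 1 :=
      (simple_mul_ascent_iff cs i u).mp hasc
    have h2 : cs.length u = α.length := by rw [hαprod, hαred]
    omega
  have hcons_prod : cs.simple i * u = cs.wordProd (i :: α) := by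
    rw [cs.wordProd_cons, ← hαprod]
  obtain ⟨k, hk, hex⟩ := strong_exchange cs hinv hcons_red hcons_prod
  match k with
  | 0 =>
    rw [List.eraseIdx_cons_zero, ← hαprod] at hex
    refine ⟨j, hjJ, ?_⟩
    have := congrArg (· * cs.simple j) hex
    simpa [mul_assoc, cs.simple_mul_simple_self] using this
  | (k'+1) =>
    exfalso
    rw [List.eraseIdx_cons_succ, cs.wordProd_cons, mul_assoc] at hex
    have hcancel : u * cs.simple j = cs.wordProd (α.eraseIdx k') :=
      mul_left_cancel hex
    have h1 : cs.length (u * cs.simple j) ≤ (α.eraseIdx k').length := by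
      rw [hcancel]; exact cs.length_wordProd_le _
    have h2 : (α.eraseIdx k').length ≤ α.length := (List.eraseIdx_sublist _ _).length_le
    have h3 : cs.length u = α.length := by rw [hαprod, hαred]
    have h4 := hu j hjJ
    have h5 : k' < α.length := by simpa using hk
    have h6 : (α.eraseIdx k').length + 1 = α.length := by
      rw [List.length_eraseIdx]
      simp only [h5, if_pos]
      omega
    omega

/-- If `s_i • σ = σ` then `s_i` is a (left) ascent of the minimal representative. -/
lemma ascent_of_smul_eq {J : Set B} {i : B} {σ : W ⧸ WJ cs J}
    (heq : cs.simple i • σ = σ) :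
    cs.length (mr cs J σ) < cs.length (cs.simple i * mr cs J σ) := by
  set u := mr cs J σ with hu
  by_contra hcon
  have hdesc : cs.length (cs.simple i * u) < cs.length u := by
    rcases cs.length_simple_mul u i with h' | h' <;> omega
  have hmem : cs.simple i * u ∈ MinRep cs J := minrep_simple_descent cs (mr_mem cs J σ) hdesc
  have hmk : (QuotientGroup.mk (cs.simple i * u) : W ⧸ WJ cs J) = σ := by
    rw [← mk_smul, hu, mr_mk]
    exact heq
  have := mr_eq cs hmem
  rw [hmk, ← hu] at this
  -- this : u = s_i * u
  have hne := cs.length_simple_mul_ne u i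
  rw [← this] at hne
  exact hne rfl

/-- If `s_i • σ ≤ σ` and `s_i • σ ≠ σ` then the min rep of `s_i • σ` is `s_i * mr σ`,
a descent. -/
lemma descent_of_smul_ne {J : Set B} {i : B} {σ : W ⧸ WJ cs J}
    (h : CosetLE cs J (cs.simple i • σ) σ) (hne : cs.simple i • σ ≠ σ) :
    cs.length (cs.simple i * mr cs J σ) < cs.length (mr cs J σ) ∧
      mr cs J (cs.simple i • σ) = cs.simple i * mr cs J σ := by
  set u := mr cs J σ with hu
  have hmku : (QuotientGroup.mk u : W ⧸ WJ cs J) = σ := mr_mk cs J σ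
  have hsmul : (cs.simple i • σ) = QuotientGroup.mk (cs.simple i * u) := by
    rw [← hmku, mk_smul]
  rcases Nat.lt_or_ge (cs.length (cs.simple i * u)) (cs.length u) with hdesc | hge
  · have hmem : cs.simple i * u ∈ MinRep cs J :=
      minrep_simple_descent cs (mr_mem cs J σ) hdesc
    refine ⟨hdesc, ?_⟩
    rw [hsmul, mr_eq cs hmem]
  · exfalso
    have hasc : cs.length u < cs.length (cs.simple i * u) := by
      have := cs.length_simple_mul_ne u i
      omega
    by_cases hmem : cs.simple i * u ∈ MinRep cs J
    · have hmr : mr cs J (cs.simple i • σ) = cs.simple i * u := by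
        rw [hsmul, mr_eq cs hmem]
      have hle := (cosetLE_iff cs J _ _).mp h
      rw [hmr, ← hu] at hle
      have := length_le_of_bruhatLE cs hle
      omega
    · obtain ⟨j, hjJ, hij⟩ := minrep_exchange cs (mr_mem cs J σ) hasc hmem
      apply hne
      have hij' : cs.simple i * u = u * cs.simple j := by rw [hu]; exact hij
      rw [hsmul, hij', ← hmku]
      rw [QuotientGroup.eq]
      have heq2 : (u * cs.simple j)⁻¹ * u = cs.simple j := by
        rw [mul_inv_rev, cs.inv_simple, mul_assoc, inv_mul_cancel, mul_one]
      rw [heq2]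
      exact simple_mem_WJ cs hjJ

end KMChev

namespace KMChev

/-- Z-property for cosets: for `σ, τ ∈ W/W_J` and a simple reflection
`s` with `sσ ≤ σ` and `sτ ≤ τ`, we have `σ ≤ τ ↔ sσ ≤ τ ↔ sσ ≤ sτ`. -/
theorem coset_z_property {B W : Type*} [Group W] {M : CoxeterMatrix B}
    (cs : CoxeterSystem M W) (J : Set B) (i : B) (σ τ : W ⧸ WJ cs J)
    (hσ : CosetLE cs J (cs.simple i • σ) σ) (hτ : CosetLE cs J (cs.simple i • τ) τ) :
    (CosetLE cs J σ τ ↔ CosetLE cs J (cs.simple i • σ) τ) ∧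
    (CosetLE cs J σ τ ↔ CosetLE cs J (cs.simple i • σ) (cs.simple i • τ)) := by
  by_cases hσe : cs.simple i • σ = σ
  · have huasc := ascent_of_smul_eq cs hσe
    by_cases hτe : cs.simple i • τ = τ
    · rw [hσe, hτe]
      exact ⟨Iff.rfl, Iff.rfl⟩
    · obtain ⟨hτd, hτmr⟩ := descent_of_smul_ne cs hτ hτe
      constructor
      · rw [hσe]
      · rw [hσe, cosetLE_iff, cosetLE_iff, hτmr]
        constructor
        · intro hle
          exact lift_mixed_le cs huasc hτd hle
        · intro hle
          exact bruhatLE_trans cs hle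
            (Relation.ReflTransGen.single (bruhatCov_simple_mul_left cs hτd))
  · obtain ⟨hσd, hσmr⟩ := descent_of_smul_ne cs hσ hσe
    by_cases hτe : cs.simple i • τ = τ
    · have hxasc := ascent_of_smul_eq cs hτe
      have hG : CosetLE cs J σ τ ↔ CosetLE cs J (cs.simple i • σ) τ := by
        rw [cosetLE_iff, cosetLE_iff, hσmr]
        constructor
        · intro hle
          exact bruhatLE_trans cs
            (Relation.ReflTransGen.single (bruhatCov_simple_mul_left cs hσd)) hle
        · intro hle
          have hxmem := mr_mem cs J τ
          have hnotmem : cs.simple i * mr cs J τ ∉ MinRep cs J := by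
            intro hmem
            have h1 : (QuotientGroup.mk (cs.simple i * mr cs J τ) : W ⧸ WJ cs J)
                = cs.simple i • τ := by
              rw [← mk_smul, mr_mk]
            have h2 := mr_eq cs hmem
            rw [h1, hτe] at h2
            have hne := cs.length_simple_mul_ne (mr cs J τ) i
            rw [← h2] at hne
            exact hne rfl
          obtain ⟨j, hjJ, hij⟩ := minrep_exchange cs hxmem hxasc hnotmem
          have h2 : BruhatLE cs (mr cs J σ) (cs.simple i * mr cs J τ) := by
            have hb := bmax_le cs (i := i) hle
            rw [bmax_eq_of_ascent cs hxasc] at hb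
            have hbsu : bmax cs i (cs.simple i * mr cs J σ) = mr cs J σ := by
              unfold bmax
              rw [cs.simple_mul_simple_cancel_left]
              exact if_pos hσd
            rwa [hbsu] at hb
          rw [hij] at h2
          have hv : cs.length (mr cs J σ) < cs.length (mr cs J σ * cs.simple j) :=
            mr_mem cs J σ j hjJ
          have hw : cs.length (mr cs J τ * cs.simple j * cs.simple j)
              < cs.length (mr cs J τ * cs.simple j) := by
            rw [cs.simple_mul_simple_cancel_right, ← hij]
            exact hxasc
          have h3 := lift_mixed_le_right cs hv hw h2
          rwa [cs.simple_mul_simple_cancel_right] at h3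
      refine ⟨hG, ?_⟩
      rw [hτe]
      exact hG
    · obtain ⟨hτd, hτmr⟩ := descent_of_smul_ne cs hτ hτe
      have hbsu : bmax cs i (cs.simple i * mr cs J σ) = mr cs J σ := by
        unfold bmax
        rw [cs.simple_mul_simple_cancel_left]
        exact if_pos hσd
      have hbsx : bmax cs i (cs.simple i * mr cs J τ) = mr cs J τ := by
        unfold bmax
        rw [cs.simple_mul_simple_cancel_left]
        exact if_pos hτd
      constructor
      · rw [cosetLE_iff, cosetLE_iff, hσmr]
        constructor
        · intro hle
          exact bruhatLE_trans cs
            (Relation.ReflTransGen.single (bruhatCov_simple_mul_left cs hσd)) hle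
        · intro hle
          exact lift_max_le cs hτd hle hσd
      · rw [cosetLE_iff, cosetLE_iff, hσmr, hτmr]
        constructor
        · intro hle
          exact lift_descent_le cs hσd hτd hle
        · intro hle
          have hb := bmax_le cs (i := i) hle
          rwa [hbsu, hbsx] at hb

end KMChev
end

section
/- Let W be a Coxeter group, J ⊆ S, v ∈ W, τ ∈ W/W_J with vW_J ≤ τ, and let w = up(v,τ) be the minimal element of {x ∈ W : v ≤ x, xW_J = τ}. Let s be a simple reflection. If sτ > τ then sw > w; if sτ < τ then sw < w; and if sτ = τ and sv > v then sw > w. -/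
namespace KMChev

open CoxeterSystem

variable {B W : Type*} [Group W] {M : CoxeterMatrix B}

open List

variable (cs : CoxeterSystem M W)

local prefix:100 "s" => cs.simple
local prefix:100 "π" => cs.wordProd
local prefix:100 "ℓ" => cs.length
local prefix:100 "ris" => cs.rightInvSeq
local prefix:100 "lis" => cs.leftInvSeq

/-! ### The sign representation on `W × ℤˣ` -/

variable [DecidableEq W]

def sigmaFun (i : B) : W × ℤˣ → W × ℤˣ :=
  fun x => (s i * x.1 * s i, if x.1 = s i then -x.2 else x.2)

lemma sigmaFun_involutive (i : B) : Function.Involutive (sigmaFun cs i) := by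
  rintro ⟨w, e⟩
  have h2 : s i * s i = 1 := cs.simple_mul_simple_self i
  have hfst : s i * (s i * w * s i) * s i = w := by
    calc s i * (s i * w * s i) * s i = (s i * s i) * w * (s i * s i) := by group
    _ = w := by rw [h2]; group
  have hcond : (s i * w * s i = s i) ↔ (w = s i) := by
    constructor
    · intro h
      have : s i * (s i * w * s i) * s i = s i * s i * s i := by rw [h]
      rw [hfst] at this
      rw [this, h2]
      group
    · intro h; rw [h, h2]; group
  simp only [sigmaFun, hfst, hcond]
  by_cases h : w = s i <;> simp [h]

def sigma (i : B) : Equiv.Perm (W × ℤˣ) := (sigmaFun_involutive cs i).toPerm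

lemma sigma_apply (i : B) (x : W × ℤˣ) :
    sigma cs i x = (s i * x.1 * s i, if x.1 = s i then -x.2 else x.2) := rfl

lemma rightInvSeq_cons (i : B) (ω : List B) :
    ris (i :: ω) = ((π ω)⁻¹ * (s i) * (π ω)) :: ris ω := rfl

lemma prod_map_sigma_apply (ω : List B) (x : W × ℤˣ) :
    ((ω.map (sigma cs)).prod : Equiv.Perm (W × ℤˣ)) x =
      (π ω * x.1 * (π ω)⁻¹, x.2 * (-1) ^ ((ris ω).count x.1)) := by
  induction ω with
  | nil => simp [wordProd_nil]
  | cons i ω ih =>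
    rw [map_cons, prod_cons, Equiv.Perm.mul_apply, ih, sigma_apply, rightInvSeq_cons]
    have hcond : (π ω * x.1 * (π ω)⁻¹ = s i) ↔ ((π ω)⁻¹ * (s i * π ω) = x.1) := by
      constructor
      · intro h; rw [← h]; group
      · intro h; rw [← h]; group
    rw [count_cons]
    refine Prod.ext ?_ ?_
    · simp only [wordProd_cons, mul_inv_rev, cs.inv_simple]
      group
    · simp only [hcond]
      by_cases h : (π ω)⁻¹ * (s i * π ω) = x.1 <;>
        simp [h, pow_succ, mul_assoc, mul_neg_one, mul_neg]

/-! ### Liftability -/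

lemma prod_map_alt_even {G : Type*} [Monoid G] (g : B → G) (i j : B) (m : ℕ) :
    ((alternatingWord i j (2 * m)).map g).prod = (g i * g j) ^ m := by
  induction m with
  | zero => simp [alternatingWord]
  | succ m ih =>
    have h1 : 2 * (m + 1) = (2 * m + 1) + 1 := by ring
    rw [h1, alternatingWord_succ', alternatingWord_succ']
    have he1 : ¬ Even (2 * m + 1) := by simp [Nat.even_add_one]
    have he2 : Even (2 * m) := even_two_mul m
    simp only [he1, he2, if_true, if_false, if_neg, map_cons, prod_cons]
    rw [ih, pow_succ']
    rw [mul_assoc]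

lemma alt_drop (i j : B) : ∀ (n r : ℕ), (alternatingWord i j n).drop r = alternatingWord i j (n - r) := by
  intro n r
  induction r generalizing n with
  | zero => simp
  | succ r ih =>
    cases n with
    | zero => simp [alternatingWord]
    | succ n =>
      rw [alternatingWord_succ']
      rw [List.drop_succ_cons, ih]
      congr 1
      omega

lemma alt_get? (i j : B) (n r : ℕ) (h : r < n) :
    (alternatingWord i j n)[r]? = some (if Even (n - r - 1) then j else i) := by
  rw [← List.head?_drop, alt_drop]
  have h2 : n - r = (n - r - 1) + 1 := by omega
  rw [h2, alternatingWord_succ']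
  rfl

section pcalc

variable (i j : B)

lemma pconj (n : ℕ) : s j * (s i * s j) ^ n = ((s i * s j)⁻¹) ^ n * s j := by
  induction n with
  | zero => simp
  | succ n ih =>
    have hbase : s j * (s i * s j) = (s i * s j)⁻¹ * s j := by
      rw [mul_inv_rev, cs.inv_simple, cs.inv_simple]; simp only [mul_assoc]
    calc s j * (s i * s j) ^ (n+1) = (s j * (s i * s j) ^ n) * (s i * s j) := by
          rw [pow_succ, mul_assoc]
    _ = ((s i * s j)⁻¹) ^ n * (s j * (s i * s j)) := by rw [ih]; simp only [mul_assoc]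
    _ = ((s i * s j)⁻¹) ^ n * ((s i * s j)⁻¹ * s j) := by rw [hbase]
    _ = ((s i * s j)⁻¹) ^ (n+1) * s j := by rw [pow_succ]; simp only [mul_assoc]

lemma G_val (k : ℕ) :
    (π (alternatingWord i j k))⁻¹ * (if Even k then s j else s i) * π (alternatingWord i j k)
      = s j * (s i * s j) ^ k := by
  rcases Nat.even_or_odd k with he | ho
  · obtain ⟨a, ha⟩ := he
    have hk : k = 2 * a := by omega
    subst hk
    rw [prod_alternatingWord_eq_mul_pow]
    have h2 : Even (2 * a) := even_two_mul a
    simp only [h2, if_true]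
    rw [Nat.mul_div_cancel_left a (by norm_num : 0 < 2), one_mul]
    calc ((s i * s j) ^ a)⁻¹ * s j * (s i * s j) ^ a
        = ((s i * s j) ^ a)⁻¹ * (s j * (s i * s j) ^ a) := by rw [mul_assoc]
    _ = ((s i * s j)⁻¹) ^ a * ((s i * s j)⁻¹) ^ a * s j := by
        rw [pconj, ← inv_pow]; simp only [mul_assoc]
    _ = ((s i * s j)⁻¹) ^ (2 * a) * s j := by rw [← pow_add]; congr 2; omega
    _ = s j * (s i * s j) ^ (2 * a) := (pconj cs i j _).symm
  · obtain ⟨a, ha⟩ := ho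
    subst ha
    rw [prod_alternatingWord_eq_mul_pow]
    have h2 : ¬ Even (2 * a + 1) := by simp [Nat.even_add_one]
    simp only [h2, if_false]
    have hdiv : (2 * a + 1) / 2 = a := by omega
    rw [hdiv]
    calc (s j * (s i * s j) ^ a)⁻¹ * s i * (s j * (s i * s j) ^ a)
        = ((s i * s j) ^ a)⁻¹ * (s j * (s i * (s j * (s i * s j) ^ a))) := by
          rw [mul_inv_rev, cs.inv_simple]; simp only [mul_assoc]
    _ = ((s i * s j) ^ a)⁻¹ * (s j * (s i * s j) ^ (a + 1)) := by
          rw [pow_succ']; simp only [mul_assoc]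
    _ = ((s i * s j)⁻¹) ^ a * ((s i * s j)⁻¹) ^ (a + 1) * s j := by
          rw [pconj, ← inv_pow]; simp only [mul_assoc]
    _ = ((s i * s j)⁻¹) ^ (2 * a + 1) * s j := by rw [← pow_add]; congr 2; omega
    _ = s j * (s i * s j) ^ (2 * a + 1) := (pconj cs i j _).symm

end pcalc

/-! ### Inversion sequences of alternating words; liftability -/

lemma ris_alt_getD (i j : B) (n r : ℕ) (h : r < n) :
    (ris (alternatingWord i j n)).getD r 1 = s j * (s i * s j) ^ (n - r - 1) := by
  rw [cs.getD_rightInvSeq, alt_drop, alt_get? i j n r h]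
  have : (Option.map cs.simple (some (if Even (n - r - 1) then j else i))).getD 1
      = (if Even (n - r - 1) then s j else s i) := by
    by_cases hp : Even (n - r - 1) <;> simp [hp]
  rw [this]
  have h2 : n - (r + 1) = n - r - 1 := by omega
  rw [h2, G_val]

lemma ris_alt_double (i j : B) (m : ℕ) (hm : (s i * s j) ^ m = 1) :
    ris (alternatingWord i j (2 * m))
      = ris (alternatingWord i j m) ++ ris (alternatingWord i j m) := by
  apply List.ext_getElem
  · simp [length_rightInvSeq, length_alternatingWord]; omega
  · intro r h1 h2
    rw [← List.getD_eq_getElem _ 1 h1, ← List.getD_eq_getElem _ 1 h2]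
    have hr2m : r < 2 * m := by
      simpa [length_rightInvSeq, length_alternatingWord] using h1
    have hlen : (ris (alternatingWord i j m)).length = m := by
      simp [length_rightInvSeq, length_alternatingWord]
    by_cases hrm : r < m
    · rw [List.getD_append _ _ _ _ (by omega)]
      rw [ris_alt_getD cs i j _ r hr2m, ris_alt_getD cs i j m r hrm]
      have : 2 * m - r - 1 = (m - r - 1) + m := by omega
      rw [this, pow_add, hm, mul_one]
    · rw [List.getD_append_right _ _ _ _ (by omega)]
      rw [ris_alt_getD cs i j _ r hr2m, hlen,
        ris_alt_getD cs i j m (r - m) (by omega)]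
      congr 2
      omega

lemma sigma_liftable : M.IsLiftable (sigma cs) := by
  intro i j
  rcases Nat.eq_zero_or_pos (M i j) with h0 | hpos
  · rw [h0, pow_zero]
  · have hp : (s i * s j) ^ M i j = 1 := cs.simple_mul_simple_pow i j
    rw [← prod_map_alt_even (sigma cs) i j (M i j)]
    apply Equiv.ext
    intro x
    rw [prod_map_sigma_apply]
    have hπ : π (alternatingWord i j (2 * M i j)) = 1 := by
      rw [prod_alternatingWord_eq_mul_pow]
      simp only [even_two_mul, if_true]
      rw [Nat.mul_div_cancel_left _ (by norm_num : 0 < 2), one_mul, hp]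
    have hcount : Even ((ris (alternatingWord i j (2 * M i j))).count x.1) := by
      rw [ris_alt_double cs i j _ hp, List.count_append]
      exact ⟨_, rfl⟩
    rw [hπ, Even.neg_one_pow hcount]
    simp

def rho : W →* Equiv.Perm (W × ℤˣ) := cs.lift ⟨sigma cs, sigma_liftable cs⟩

lemma rho_wordProd (ω : List B) : rho cs (π ω) = (ω.map (sigma cs)).prod := by
  show rho cs (List.prod (List.map cs.simple ω)) = _
  rw [MonoidHom.map_list_prod, List.map_map]
  congr 1
  apply List.map_congr_left
  intro i _
  exact cs.lift_apply_simple (sigma_liftable cs) i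

lemma neg_one_pow_count_ris_eq {ω ω' : List B} (h : π ω = π ω') (t : W) :
    ((-1 : ℤˣ)) ^ ((ris ω).count t) = (-1) ^ ((ris ω').count t) := by
  have h1 := prod_map_sigma_apply cs ω (t, 1)
  have h2 := prod_map_sigma_apply cs ω' (t, 1)
  rw [← rho_wordProd, h, rho_wordProd] at h1
  rw [h2] at h1
  have := congrArg Prod.snd h1
  simpa using this.symm

lemma conj_injective (a b : W) : Function.Injective (fun x : W => a * x * b) := by
  intro x y h
  simp only [] at h
  have h1 : a * x = a * y := mul_right_cancel h
  exact mul_left_cancel h1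

lemma rightInvSeq_append (α β : List B) :
    ris (α ++ β) = (ris α).map (fun x => (π β)⁻¹ * x * (π β)) ++ ris β := by
  induction α with
  | nil => simp
  | cons i α ih =>
    rw [List.cons_append, rightInvSeq_cons, rightInvSeq_cons, ih,
      List.map_cons, List.cons_append]
    congr 1
    rw [wordProd_append, mul_inv_rev]
    simp only [mul_assoc]

lemma leftInvSeq_cons' (i : B) (ω : List B) :
    lis (i :: ω) = s i :: (lis ω).map (⇑(MulAut.conj (s i))) := rfl

lemma leftInvSeq_eq_map (ω : List B) :
    lis ω = (ris ω).map (fun x => π ω * x * (π ω)⁻¹) := by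
  induction ω with
  | nil => simp
  | cons i ω ih =>
    rw [leftInvSeq_cons', rightInvSeq_cons, List.map_cons, ih, List.map_map]
    congr 1
    · rw [wordProd_cons, mul_inv_rev, cs.inv_simple]
      have h2 : s i * s i = 1 := cs.simple_mul_simple_self i
      symm
      calc s i * π ω * ((π ω)⁻¹ * s i * π ω) * ((π ω)⁻¹ * s i)
          = s i * (s i * s i) := by group
      _ = s i := by rw [h2, mul_one]
    · apply List.map_congr_left
      intro x _
      simp only [Function.comp_apply, MulAut.conj_apply, wordProd_cons, mul_inv_rev,
        cs.inv_simple]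
      group


lemma count_conj_map (l : List W) (d x : W) :
    (l.map (fun z => d⁻¹ * z * d)).count x = l.count (d * x * d⁻¹) := by
  have h : x = (fun z : W => d⁻¹ * z * d) (d * x * d⁻¹) := by
    show x = d⁻¹ * (d * x * d⁻¹) * d
    group
  conv_lhs => rw [h]
  exact List.count_map_of_injective _ _ (conj_injective _ _) _

lemma count_conj_map' (l : List W) (d x : W) :
    (l.map (fun z => d * z * d⁻¹)).count x = l.count (d⁻¹ * x * d) := by
  have h : x = (fun z : W => d * z * d⁻¹) (d⁻¹ * x * d) := by
    show x = d * (d⁻¹ * x * d) * d⁻¹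
    group
  conv_lhs => rw [h]
  exact List.count_map_of_injective _ _ (conj_injective _ _) _

theorem mem_ris_of_isRightInversion {ω : List B} (hred : cs.IsReduced ω) {t : W}
    (ht : cs.IsRightInversion (π ω) t) : t ∈ ris ω := by
  by_contra hmem
  obtain ⟨htr, hlen⟩ := ht
  obtain ⟨y, i0, hty⟩ := htr
  obtain ⟨ψ, hψred, hψ⟩ := cs.exists_reduced_word' (π ω * t)
  obtain ⟨μ, hμred, hμ⟩ := cs.exists_reduced_word' y
  have htt : t * t = 1 := IsReflection.mul_self ⟨y, i0, hty⟩
  set ω' := ψ ++ (μ ++ ([i0] ++ μ.reverse)) with hω'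
  have hπtail : π (μ ++ ([i0] ++ μ.reverse)) = t := by
    rw [wordProd_append, wordProd_append, wordProd_reverse, wordProd_singleton, ← hμ, hty]
    simp only [mul_assoc]
  have hπ : π ω' = π ω := by
    rw [hω', wordProd_append, hπtail, ← hψ, mul_assoc, htt, mul_one]
  have hc1 : ((ris ω').count t)
      = (ris ψ).count t + ((ris (μ ++ ([i0] ++ μ.reverse))).count t) := by
    rw [hω', rightInvSeq_append, List.count_append]
    congr 1
    rw [count_conj_map, hπtail]
    congr 1
    group
  have hπt2 : π ([i0] ++ μ.reverse) = s i0 * y⁻¹ := by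
    rw [wordProd_append, wordProd_singleton, wordProd_reverse, ← hμ]
  have hc2 : ((ris (μ ++ ([i0] ++ μ.reverse))).count t)
      = (ris μ).count (s i0) + ((ris ([i0] ++ μ.reverse)).count t) := by
    rw [rightInvSeq_append, List.count_append]
    congr 1
    rw [count_conj_map, hπt2, hty]
    congr 1
    have h2 : s i0 * s i0 = 1 := cs.simple_mul_simple_self i0
    calc (s i0 * y⁻¹) * (y * s i0 * y⁻¹) * (s i0 * y⁻¹)⁻¹
        = s i0 * (s i0 * s i0) := by rw [mul_inv_rev, inv_inv, cs.inv_simple]; group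
    _ = s i0 := by rw [h2, mul_one]
  have hc3 : ((ris ([i0] ++ μ.reverse)).count t) = 1 + ((ris μ.reverse).count t) := by
    rw [rightInvSeq_append, List.count_append]
    congr 1
    rw [cs.rightInvSeq_singleton, List.map_cons, List.map_nil]
    have : (π μ.reverse)⁻¹ * s i0 * π μ.reverse = t := by
      rw [wordProd_reverse, ← hμ, inv_inv, hty]
    rw [this]
    simp
  have hc4 : ((ris μ.reverse).count t) = (ris μ).count (s i0) := by
    rw [cs.rightInvSeq_reverse, List.count_reverse, leftInvSeq_eq_map, count_conj_map',
      ← hμ, hty]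
    congr 1
    group
  have hzero : (ris ω).count t = 0 := List.count_eq_zero_of_not_mem hmem
  have hpar := neg_one_pow_count_ris_eq cs hπ.symm t
  rw [hzero, pow_zero, hc1, hc2, hc3, hc4] at hpar
  set c := (ris μ).count (s i0) with hc
  set c1 := (ris ψ).count t with hc1def
  rcases Nat.even_or_odd c1 with he | ho
  · obtain ⟨b, hb⟩ := he
    have hodd : Odd (c1 + (c + (1 + c))) := ⟨b + c, by omega⟩
    rw [Odd.neg_one_pow hodd] at hpar
    exact absurd hpar (by decide)
  · have hne : c1 ≠ 0 := by
      obtain ⟨b, hb⟩ := ho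
      omega
    have hmemψ : t ∈ ris ψ := by
      rw [← List.count_pos_iff]
      omega
    have hinv := cs.isRightInversion_of_mem_rightInvSeq hψred hmemψ
    have h2 := hinv.2
    rw [← hψ, mul_assoc, htt, mul_one] at h2
    exact absurd hlen (lt_asymm h2)


/-! ### Bruhat order basics -/

section bruhat

omit [DecidableEq W]

lemma BruhatLE.length_le {v w : W} (h : BruhatLE cs v w) : ℓ v ≤ ℓ w := by
  induction h with
  | refl => exact le_refl _
  | tail _ hc ih => have := hc.2; omega

lemma bruhatCov_mul_simple_left {i : B} {w : W} (h : ℓ (s i * w) = ℓ w + 1) :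
    BruhatCov cs w (s i * w) := by
  refine ⟨⟨w⁻¹ * s i * w, ?_, by group⟩, h⟩
  have := (cs.isReflection_simple i).conj w⁻¹
  rwa [inv_inv] at this

lemma bruhatCov_mul_simple_left' {i : B} {w : W} (h : ℓ (s i * w) + 1 = ℓ w) :
    BruhatCov cs (s i * w) w := by
  have hc : s i * (s i * w) = w := by
    rw [← mul_assoc, cs.simple_mul_simple_self, one_mul]
  have := bruhatCov_mul_simple_left cs (i := i) (w := s i * w) (by rw [hc]; omega)
  rwa [hc] at this

lemma bruhatLT_mul_simple_left {i : B} {w : W} (h : ℓ (s i * w) = ℓ w + 1) :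
    BruhatLT cs w (s i * w) := by
  refine ⟨Relation.ReflTransGen.single (bruhatCov_mul_simple_left cs h), ?_⟩
  intro he
  rw [← he] at h
  omega

lemma bruhatLT_mul_simple_left' {i : B} {w : W} (h : ℓ (s i * w) + 1 = ℓ w) :
    BruhatLT cs (s i * w) w := by
  refine ⟨Relation.ReflTransGen.single (bruhatCov_mul_simple_left' cs h), ?_⟩
  intro he
  rw [he] at h
  omega

end bruhat

/-! ### Strong exchange (eraseIdx form), deletion, subwords -/

theorem strong_exchange_erase {w t : W} (htr : cs.IsReflection t) {ω : List B}
    (hred : cs.IsReduced ω) (hw : π ω = w) (hlen : ℓ (w * t) < ℓ w) :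
    ∃ k, k < ω.length ∧ w * t = π (ω.eraseIdx k) := by
  have hmem : t ∈ ris ω := mem_ris_of_isRightInversion cs hred (by rw [hw]; exact ⟨htr, hlen⟩)
  obtain ⟨k, hk, hkt⟩ := List.getElem_of_mem hmem
  refine ⟨k, by simpa using hk, ?_⟩
  have h2 := cs.wordProd_mul_getD_rightInvSeq ω k
  rw [List.getD_eq_getElem _ 1 hk, hkt, hw] at h2
  exact h2

theorem deletion_s8 (ω : List B) : ∃ φ, φ.Sublist ω ∧ cs.IsReduced φ ∧ π φ = π ω := by
  induction ω using List.reverseRecOn with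
  | nil =>
    refine ⟨[], List.Sublist.refl _, ?_, rfl⟩
    show ℓ (π ([] : List B)) = ([] : List B).length
    simp
  | append_singleton α i ih =>
    obtain ⟨χ, hsub, hred, hπ⟩ := ih
    rcases cs.length_mul_simple (π χ) i with hup | hdown
    · refine ⟨χ ++ [i], hsub.append (List.Sublist.refl _), ?_, ?_⟩
      · show ℓ (π (χ ++ [i])) = (χ ++ [i]).length
        rw [wordProd_append, wordProd_singleton, hup, hred]
        simp
      · rw [wordProd_append, wordProd_append, wordProd_singleton, hπ]
    · obtain ⟨k, hk, he⟩ := strong_exchange_erase cs (cs.isReflection_simple i) hred rfl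
        (by omega)
      refine ⟨χ.eraseIdx k, ?_, ?_, ?_⟩
      · exact ((χ.eraseIdx_sublist k).trans hsub).trans (List.sublist_append_left α [i])
      · show ℓ (π (χ.eraseIdx k)) = (χ.eraseIdx k).length
        have hlen2 : (χ.eraseIdx k).length = χ.length - 1 := by
          rw [List.length_eraseIdx]
          simp [hk]
        rw [← he, hlen2]
        have := hred
        unfold CoxeterSystem.IsReduced at this
        omega
      · rw [← he, wordProd_append, wordProd_singleton, hπ]

theorem chain_subword {v w : W} (h : BruhatLE cs v w) :
    ∀ ω : List B, cs.IsReduced ω → π ω = w →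
      ∃ φ : List B, φ.Sublist ω ∧ cs.IsReduced φ ∧ π φ = v := by
  induction h with
  | refl => exact fun ω hred hπ => ⟨ω, List.Sublist.refl ω, hred, hπ⟩
  | @tail b c hab hbc ih =>
    intro ω hred hπ
    obtain ⟨⟨t, htr, hbt⟩, hlen⟩ := hbc
    have hb : c * t = b := by
      rw [hbt, mul_assoc, htr.mul_self, mul_one]
    obtain ⟨k, hk, he⟩ := strong_exchange_erase cs htr hred hπ
      (by rw [hb]; omega)
    rw [hb] at he
    have hlen2 : (ω.eraseIdx k).length = ω.length - 1 := by
      rw [List.length_eraseIdx]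
      simp [hk]
    have hred' : cs.IsReduced (ω.eraseIdx k) := by
      show ℓ (π (ω.eraseIdx k)) = _
      rw [← he, hlen2]
      have h1 : ℓ (π ω) = ω.length := hred
      rw [hπ] at h1
      omega
    obtain ⟨φ, hs, hr, hp⟩ := ih (ω.eraseIdx k) hred' he.symm
    exact ⟨φ, hs.trans (ω.eraseIdx_sublist k), hr, hp⟩

/-! ### The master induction: subword ⇒ chain, ascent monotonicity, property Z -/

theorem master : ∀ n : ℕ,
    (∀ ω φ : List B, cs.IsReduced ω → ω.length ≤ n → φ.Sublist ω →
      BruhatLE cs (π φ) (π ω)) ∧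
    (∀ (i : B) (a b : W), BruhatLE cs a b → ℓ b ≤ n → ℓ (s i * a) = ℓ a + 1 →
      ℓ (s i * b) = ℓ b + 1 → BruhatLE cs (s i * a) (s i * b)) ∧
    (∀ (i : B) (w v : W), ℓ w ≤ n → ℓ (s i * w) < ℓ w → BruhatLE cs v w →
      ℓ v < ℓ (s i * v) → BruhatLE cs v (s i * w)) := by
  intro n
  induction n using Nat.strong_induction_on with
  | _ n IH =>
  have partS : ∀ ω φ : List B, cs.IsReduced ω → ω.length ≤ n → φ.Sublist ω →
      BruhatLE cs (π φ) (π ω) := by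
    intro ω φ hred hlen hsub
    match ω with
    | [] =>
      have : φ = [] := List.sublist_nil.mp hsub
      subst this
      exact Relation.ReflTransGen.refl
    | j :: ω₁ =>
      have hn1 : ω₁.length + 1 ≤ n := by simpa using hlen
      have hred0 : ℓ (π (j :: ω₁)) = ω₁.length + 1 := by
        have : ℓ (π (j :: ω₁)) = (j :: ω₁).length := hred
        simpa using this
      have hple := cs.length_wordProd_le ω₁
      have hred₁ : cs.IsReduced ω₁ := by
        show ℓ (π ω₁) = ω₁.length
        rw [wordProd_cons] at hred0
        rcases cs.length_simple_mul (π ω₁) j with h | h <;> omega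
      have hasc₁ : ℓ (s j * π ω₁) = ℓ (π ω₁) + 1 := by
        rw [wordProd_cons] at hred0
        have : ℓ (π ω₁) = ω₁.length := hred₁
        omega
      have hcov₁ : BruhatCov cs (π ω₁) (π (j :: ω₁)) := by
        rw [wordProd_cons]
        exact bruhatCov_mul_simple_left cs hasc₁
      rcases List.sublist_cons_iff.mp hsub with hφ₁ | ⟨φ₁, rfl, hφ₁⟩
      · exact ((IH (n-1) (by omega)).1 ω₁ φ hred₁ (by omega) hφ₁).tail hcov₁
      · have hx := (IH (n-1) (by omega)).1 ω₁ φ₁ hred₁ (by omega) hφ₁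
        rcases cs.length_simple_mul (π φ₁) j with hxup | hxdown
        · have hM := (IH (n-1) (by omega)).2.1 j (π φ₁) (π ω₁) hx
            (by rw [hred₁]; omega) hxup hasc₁
          rw [wordProd_cons, wordProd_cons]
          exact hM
        · have hcovx : BruhatCov cs (s j * π φ₁) (π φ₁) :=
            bruhatCov_mul_simple_left' cs hxdown
          rw [wordProd_cons]
          exact ((Relation.ReflTransGen.single hcovx).trans hx).tail hcov₁
  have partZ : ∀ (i : B) (w v : W), ℓ w ≤ n → ℓ (s i * w) < ℓ w → BruhatLE cs v w →
      ℓ v < ℓ (s i * v) → BruhatLE cs v (s i * w) := by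
    intro i w v hwn hdesc hvw hvasc
    obtain ⟨ω₁, hred₁, hw₁⟩ := cs.exists_reduced_word' (s i * w)
    have hcancel : s i * (s i * w) = w := by
      rw [← mul_assoc, cs.simple_mul_simple_self, one_mul]
    have hdesc' : ℓ (s i * w) + 1 = ℓ w := by
      rcases cs.length_simple_mul w i with h | h <;> omega
    have hπω : π (i :: ω₁) = w := by
      rw [wordProd_cons, ← hw₁, hcancel]
    have hredω : cs.IsReduced (i :: ω₁) := by
      show ℓ (π (i :: ω₁)) = (i :: ω₁).length
      rw [hπω]
      have : ℓ (s i * w) = ω₁.length := by rw [hw₁]; exact hred₁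
      simp only [List.length_cons]
      omega
    obtain ⟨φ, hsub, hφred, hφπ⟩ := chain_subword cs hvw (i :: ω₁) hredω hπω
    rcases List.sublist_cons_iff.mp hsub with hφ₁ | ⟨φ₁, rfl, hφ₁⟩
    · have := (IH (n-1) (by omega)).1 ω₁ φ hred₁ ?_ hφ₁
      · rw [hφπ, ← hw₁] at this
        exact this
      · have : ℓ (s i * w) = ω₁.length := by rw [hw₁]; exact hred₁
        omega
    · exfalso
      have hφlen : ℓ v = φ₁.length + 1 := by
        rw [← hφπ]
        have : ℓ (π (i :: φ₁)) = (i :: φ₁).length := hφred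
        simpa using this
      have hπφ₁ : π φ₁ = s i * v := by
        rw [← hφπ, wordProd_cons, ← mul_assoc, cs.simple_mul_simple_self, one_mul]
      have := cs.length_wordProd_le φ₁
      rw [hπφ₁] at this
      omega
  have partM : ∀ (i : B) (a b : W), BruhatLE cs a b → ℓ b ≤ n → ℓ (s i * a) = ℓ a + 1 →
      ℓ (s i * b) = ℓ b + 1 → BruhatLE cs (s i * a) (s i * b) := by
    intro i a b hab
    induction hab with
    | refl => exact fun _ _ _ => Relation.ReflTransGen.refl
    | @tail c b hac hcb ihc =>
      intro hbn ha hb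
      obtain ⟨⟨t, htr, hbt⟩, hlen⟩ := hcb
      rcases cs.length_simple_mul c i with hcup | hcdown
      · have h1 : BruhatLE cs (s i * a) (s i * c) := ihc (by omega) ha hcup
        have hcov2 : BruhatCov cs (s i * c) (s i * b) := by
          refine ⟨⟨t, htr, by rw [hbt, mul_assoc]⟩, by omega⟩
        exact h1.tail hcov2
      · have hn1 : 1 ≤ n := by omega
        have hZ := (IH (n-1) (by omega)).2.2 i c a (by omega) (by omega) hac (by omega)
        have hcancel : s i * (s i * c) = c := by
          rw [← mul_assoc, cs.simple_mul_simple_self, one_mul]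
        have hM := (IH (n-1) (by omega)).2.1 i a (s i * c) hZ (by omega) ha
          (by rw [hcancel]; omega)
        rw [hcancel] at hM
        have h2 : BruhatLE cs c b := Relation.ReflTransGen.single ⟨⟨t, htr, hbt⟩, hlen⟩
        have h3 : BruhatCov cs b (s i * b) := bruhatCov_mul_simple_left cs hb
        exact ((hM.trans h2)).tail h3
  exact ⟨partS, partM, partZ⟩

theorem property_Z {i : B} {w v : W} (hdesc : ℓ (s i * w) < ℓ w)
    (hvw : BruhatLE cs v w) (hvasc : ℓ v < ℓ (s i * v)) : BruhatLE cs v (s i * w) :=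
  (master cs (ℓ w)).2.2 i w v le_rfl hdesc hvw hvasc

theorem subword_le {ω φ : List B} (hred : cs.IsReduced ω) (hsub : φ.Sublist ω) :
    BruhatLE cs (π φ) (π ω) :=
  (master cs ω.length).1 ω φ hred le_rfl hsub

/-! ### Parabolic quotients -/

section coset

variable (J : Set B)

lemma word_mem_WJ {κ : List B} (hκ : ∀ j ∈ κ, j ∈ J) : π κ ∈ WJ cs J := by
  induction κ with
  | nil => rw [wordProd_nil]; exact one_mem _
  | cons j κ ih =>
    rw [wordProd_cons]
    exact mul_mem (Subgroup.subset_closure ⟨j, hκ j (by simp), rfl⟩)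
      (ih fun x hx => hκ x (by simp [hx]))

lemma WJ_word {a : W} (ha : a ∈ WJ cs J) :
    ∃ κ : List B, (∀ j ∈ κ, j ∈ J) ∧ π κ = a := by
  induction ha using Subgroup.closure_induction with
  | mem x hx =>
    obtain ⟨j, hj, rfl⟩ := hx
    exact ⟨[j], by simpa using hj, cs.wordProd_singleton j⟩
  | one => exact ⟨[], by simp, cs.wordProd_nil⟩
  | mul x y _ _ hx hy =>
    obtain ⟨κ₁, h₁, rfl⟩ := hx
    obtain ⟨κ₂, h₂, rfl⟩ := hy
    refine ⟨κ₁ ++ κ₂, ?_, cs.wordProd_append κ₁ κ₂⟩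
    intro j hj
    rcases List.mem_append.mp hj with h | h
    · exact h₁ j h
    · exact h₂ j h
  | inv x _ hx =>
    obtain ⟨κ, h₁, rfl⟩ := hx
    exact ⟨κ.reverse, fun j hj => h₁ j (List.mem_reverse.mp hj), cs.wordProd_reverse κ⟩

lemma reduced_WJ_word {a : W} (ha : a ∈ WJ cs J) :
    ∃ κ : List B, (∀ j ∈ κ, j ∈ J) ∧ cs.IsReduced κ ∧ π κ = a := by
  obtain ⟨κ₀, hκ₀J, hκ₀⟩ := WJ_word cs J ha
  obtain ⟨κ, hsub, hred, hπ⟩ := deletion_s8 cs κ₀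
  exact ⟨κ, fun j hj => hκ₀J j (hsub.subset hj), hred, by rw [hπ, hκ₀]⟩

/-- `u` is a minimal length representative of the coset `τ`. -/
def IsMinLen (u : W) (τ : W ⧸ WJ cs J) : Prop :=
  (QuotientGroup.mk u : W ⧸ WJ cs J) = τ ∧
    ∀ x : W, (QuotientGroup.mk x : W ⧸ WJ cs J) = τ → ℓ u ≤ ℓ x

lemma exists_minlen (τ : W ⧸ WJ cs J) : ∃ u, IsMinLen cs J u τ := by
  classical
  obtain ⟨x, hx⟩ := Quotient.exists_rep τ
  have hx' : (QuotientGroup.mk x : W ⧸ WJ cs J) = τ := hx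
  have hex : ∃ m : ℕ, ∃ y : W, (QuotientGroup.mk y : W ⧸ WJ cs J) = τ ∧ ℓ y = m :=
    ⟨ℓ x, x, hx', rfl⟩
  obtain ⟨y, hy1, hy2⟩ := Nat.find_spec hex
  refine ⟨y, hy1, ?_⟩
  intro z hz
  rw [hy2]
  exact Nat.find_min' hex ⟨z, hz, rfl⟩

lemma minlen_mul {u : W} {τ : W ⧸ WJ cs J} (hu : IsMinLen cs J u τ) {a : W}
    (ha : a ∈ WJ cs J) : ℓ (u * a) = ℓ u + ℓ a := by
  obtain ⟨κ, hκJ, hκred, hκπ⟩ := reduced_WJ_word cs J ha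
  obtain ⟨ωu, hured, huw⟩ := cs.exists_reduced_word' u
  obtain ⟨ζ, hζsub, hζred, hζπ⟩ := deletion_s8 cs (ωu ++ κ)
  obtain ⟨ζ₁, ζ₂, rfl, h₁, h₂⟩ := List.sublist_append_iff.mp hζsub
  have hζπ' : π ζ₁ * π ζ₂ = u * a := by
    rw [← wordProd_append, hζπ, wordProd_append, ← huw, hκπ]
  have hπζ₂J : π ζ₂ ∈ WJ cs J := word_mem_WJ cs J (fun j hj => hκJ j (h₂.subset hj))
  have hu' : u = π ζ₁ * (π ζ₂ * a⁻¹) := by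
    rw [← mul_assoc, hζπ', mul_assoc, mul_inv_cancel, mul_one]
  have hcos : (QuotientGroup.mk (π ζ₁) : W ⧸ WJ cs J) = τ := by
    rw [← hu.1, QuotientGroup.eq]
    have h3 : (π ζ₁)⁻¹ * u = π ζ₂ * a⁻¹ := by rw [hu']; group
    rw [h3]
    exact mul_mem hπζ₂J (inv_mem ha)
  have hmin := hu.2 (π ζ₁) hcos
  have hb1 : ℓ (π ζ₁) ≤ ζ₁.length := cs.length_wordProd_le ζ₁
  have hb2 : ζ₁.length ≤ ωu.length := h₁.length_le
  have huωu : ℓ u = ωu.length := by rw [huw]; exact hured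
  have hζeq : ζ₁ = ωu := h₁.eq_of_length (by omega)
  have hζ₂a : π ζ₂ = a := by
    rw [hζeq, ← huw] at hζπ'
    exact mul_left_cancel hζπ'
  have hζlen : ℓ (u * a) = ζ₁.length + ζ₂.length := by
    have h4 : ℓ (π (ζ₁ ++ ζ₂)) = (ζ₁ ++ ζ₂).length := hζred
    rw [wordProd_append, hζeq, ← huw, hζ₂a, List.length_append] at h4
    rw [h4, hζeq]
  have hb3 : ℓ a ≤ ζ₂.length := by rw [← hζ₂a]; exact cs.length_wordProd_le ζ₂
  have hb4 : ℓ (u * a) ≤ ℓ u + ℓ a := cs.length_mul_le u a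
  omega

lemma isMinLen_unique {u u' : W} {τ : W ⧸ WJ cs J} (hu : IsMinLen cs J u τ)
    (hu' : IsMinLen cs J u' τ) : u = u' := by
  have ha : u⁻¹ * u' ∈ WJ cs J := (QuotientGroup.eq).mp (hu.1.trans hu'.1.symm)
  have h1 := minlen_mul cs J hu ha
  rw [show u * (u⁻¹ * u') = u' from by group] at h1
  have h2 := hu.2 u' hu'.1
  have h3 := hu'.2 u hu.1
  have h4 : ℓ (u⁻¹ * u') = 0 := by omega
  exact inv_mul_eq_one.mp (cs.length_eq_zero_iff.mp h4)

lemma isMinLen_minRep {u : W} {τ : W ⧸ WJ cs J} (hu : IsMinLen cs J u τ) :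
    u ∈ MinRep cs J := by
  intro j hj
  have h := minlen_mul cs J hu (Subgroup.subset_closure ⟨j, hj, rfl⟩)
  rw [cs.length_simple] at h
  omega

lemma minRep_eq_minlen {u₀ u : W} {τ : W ⧸ WJ cs J} (hu₀ : IsMinLen cs J u₀ τ)
    (hu : u ∈ MinRep cs J) (hmk : (QuotientGroup.mk u : W ⧸ WJ cs J) = τ) : u = u₀ := by
  have ha : u₀⁻¹ * u ∈ WJ cs J := (QuotientGroup.eq).mp (hu₀.1.trans hmk.symm)
  by_contra hne
  have hane : u₀⁻¹ * u ≠ 1 := by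
    intro h
    exact hne (inv_mul_eq_one.mp h).symm
  obtain ⟨κ, hκJ, hκred, hκπ⟩ := reduced_WJ_word cs J ha
  have hκne : κ ≠ [] := by
    intro h
    rw [h, cs.wordProd_nil] at hκπ
    exact hane hκπ.symm
  rcases List.eq_nil_or_concat κ with h | ⟨κ', j, rfl⟩
  · exact hκne h
  simp only [List.concat_eq_append] at hκJ hκred hκπ hκne
  have hjJ : j ∈ J := hκJ j (by simp)
  have hasj : (u₀⁻¹ * u) * s j = π κ' := by
    rw [← hκπ, wordProd_append, wordProd_singleton, mul_assoc,
      cs.simple_mul_simple_self, mul_one]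
  have haj : (u₀⁻¹ * u) * s j ∈ WJ cs J := by
    rw [hasj]
    exact word_mem_WJ cs J (fun x hx => hκJ x (by simp [hx]))
  have h1 := minlen_mul cs J hu₀ haj
  rw [show u₀ * ((u₀⁻¹ * u) * s j) = u * s j from by group] at h1
  have h2 : ℓ ((u₀⁻¹ * u) * s j) ≤ κ'.length := by
    rw [hasj]; exact cs.length_wordProd_le κ'
  have h3 : ℓ (u₀⁻¹ * u) = κ'.length + 1 := by
    rw [← hκπ]
    have h5 : ℓ (π (κ' ++ [j])) = (κ' ++ [j]).length := hκred
    simpa using h5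
  have h4 := minlen_mul cs J hu₀ ha
  rw [show u₀ * (u₀⁻¹ * u) = u from by group] at h4
  have h5 := hu j hjJ
  omega

lemma mk_simple_mul (i : B) (u : W) :
    (QuotientGroup.mk (s i * u) : W ⧸ WJ cs J) = (s i) • (QuotientGroup.mk u) := rfl

lemma smul_smul_self (i : B) (τ : W ⧸ WJ cs J) : (s i) • ((s i) • τ) = τ := by
  rw [smul_smul, cs.simple_mul_simple_self, one_smul]

lemma isMinLen_smul_of_lt {u : W} {τ : W ⧸ WJ cs J} {i : B} (hu : IsMinLen cs J u τ)
    (hlt : ℓ (s i * u) < ℓ u) : IsMinLen cs J (s i * u) ((s i) • τ) := by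
  constructor
  · rw [mk_simple_mul, hu.1]
  · intro x hx
    have hx' : (QuotientGroup.mk (s i * x) : W ⧸ WJ cs J) = τ := by
      rw [mk_simple_mul, hx, smul_smul_self]
    have h1 := hu.2 _ hx'
    rcases cs.length_simple_mul x i with h | h <;> omega

lemma isMinLen_smul_cases {u : W} {τ : W ⧸ WJ cs J} {i : B} (hu : IsMinLen cs J u τ)
    (hgt : ℓ (s i * u) = ℓ u + 1) :
    IsMinLen cs J (s i * u) ((s i) • τ) ∨ (∃ j ∈ J, s i * u = u * s j) := by
  by_cases hmem : s i * u ∈ MinRep cs J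
  · left
    obtain ⟨u₁, hu₁⟩ := exists_minlen cs J ((s i) • τ)
    have := minRep_eq_minlen cs J hu₁ hmem (by rw [mk_simple_mul, hu.1])
    rw [this]
    exact hu₁
  · right
    simp only [MinRep, Set.mem_setOf_eq, not_forall] at hmem
    obtain ⟨j, hjJ, hnlt⟩ := hmem
    have hne := cs.length_mul_simple_ne (s i * u) j
    have hdesc : ℓ ((s i * u) * s j) < ℓ (s i * u) := by omega
    obtain ⟨ωu, hured, huw⟩ := cs.exists_reduced_word' u
    have hredsu : cs.IsReduced (i :: ωu) := by
      show ℓ (π (i :: ωu)) = (i :: ωu).length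
      rw [wordProd_cons, ← huw]
      have : ℓ u = ωu.length := by rw [huw]; exact hured
      simp only [List.length_cons]
      omega
    have hπsu : π (i :: ωu) = s i * u := by rw [wordProd_cons, ← huw]
    obtain ⟨k, hk, he⟩ := strong_exchange_erase cs (cs.isReflection_simple j)
      hredsu hπsu hdesc
    cases k with
    | zero =>
      refine ⟨j, hjJ, ?_⟩
      simp only [List.eraseIdx_cons_zero] at he
      rw [← huw] at he
      calc s i * u = (s i * u * s j) * s j := by
            rw [mul_assoc, cs.simple_mul_simple_self, mul_one]
      _ = u * s j := by rw [he]
    | succ k =>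
      exfalso
      simp only [List.eraseIdx_cons_succ] at he
      rw [wordProd_cons, mul_assoc] at he
      have he2 : u * s j = π (ωu.eraseIdx k) := mul_left_cancel he
      have hb : ℓ (u * s j) ≤ (ωu.eraseIdx k).length := by
        rw [he2]; exact cs.length_wordProd_le _
      have hk' : k < ωu.length := by simpa using hk
      have hlen2 : (ωu.eraseIdx k).length = ωu.length - 1 := by
        rw [List.length_eraseIdx]
        simp [hk']
      have h1 := minlen_mul cs J hu (Subgroup.subset_closure ⟨j, hjJ, rfl⟩)
      rw [cs.length_simple] at h1
      have : ℓ u = ωu.length := by rw [huw]; exact hured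
      omega

end coset

omit [DecidableEq W] in
theorem lift_lowlift' (J : Set B) (i : B) (v w : W) (τ : W ⧸ WJ cs J)
    (hw : (BruhatLE cs v w ∧ (QuotientGroup.mk w : W ⧸ WJ cs J) = τ) ∧
      ∀ x : W, BruhatLE cs v x → (QuotientGroup.mk x : W ⧸ WJ cs J) = τ →
        BruhatLE cs w x) :
    (CosetLT cs J τ (cs.simple i • τ) → BruhatLT cs w (cs.simple i * w)) ∧
    (CosetLT cs J (cs.simple i • τ) τ → BruhatLT cs (cs.simple i * w) w) ∧
    (cs.simple i • τ = τ → BruhatLT cs v (cs.simple i * v) →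
      BruhatLT cs w (cs.simple i * w)) := by
  classical
  obtain ⟨⟨hvw, hwτ⟩, hmin⟩ := hw
  obtain ⟨u, hu⟩ := exists_minlen cs J τ
  have hmem : u⁻¹ * w ∈ WJ cs J := (QuotientGroup.eq).mp (hu.1.trans hwτ.symm)
  have hwdec : cs.length w = cs.length u + cs.length (u⁻¹ * w) := by
    have h := minlen_mul cs J hu hmem
    rwa [show u * (u⁻¹ * w) = w from by group] at h
  have hwua : w = u * (u⁻¹ * w) := by group
  have hswdec : ∀ u' : W, IsMinLen cs J u' (cs.simple i • τ) → u' = cs.simple i * u →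
      cs.length (cs.simple i * w) = cs.length (cs.simple i * u) + cs.length (u⁻¹ * w) := by
    intro u' hu' hequ
    have h := minlen_mul cs J hu' hmem
    rw [hequ] at h
    rwa [show cs.simple i * u * (u⁻¹ * w) = cs.simple i * w from by group] at h
  have hfix_of : ∀ j ∈ J, cs.simple i * u = u * cs.simple j → cs.simple i • τ = τ := by
    intro j hjJ hfix
    have h1 : (QuotientGroup.mk (cs.simple i * u) : W ⧸ WJ cs J) = cs.simple i • τ := by
      rw [mk_simple_mul, hu.1]
    have h2 : (QuotientGroup.mk (u * cs.simple j) : W ⧸ WJ cs J) = τ := by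
      rw [← hu.1, QuotientGroup.eq]
      have : (u * cs.simple j)⁻¹ * u = (cs.simple j)⁻¹ := by group
      rw [this, cs.inv_simple]
      exact Subgroup.subset_closure ⟨j, hjJ, rfl⟩
    rw [← h1, hfix, h2]
  refine ⟨?_, ?_, ?_⟩
  · rintro ⟨hle, hne⟩
    obtain ⟨v₁, w₁, hv₁MR, hw₁MR, hv₁mk, hw₁mk, hvw₁⟩ := hle
    obtain ⟨u', hu'⟩ := exists_minlen cs J (cs.simple i • τ)
    have hv₁ : v₁ = u := minRep_eq_minlen cs J hu hv₁MR hv₁mk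
    have hw₁ : w₁ = u' := minRep_eq_minlen cs J hu' hw₁MR hw₁mk
    have hlen_le : cs.length u ≤ cs.length u' := by
      have : BruhatLE cs u u' := by rw [← hv₁, ← hw₁]; exact hvw₁
      exact this.length_le
    rcases cs.length_simple_mul u i with hgt | hlt
    · rcases isMinLen_smul_cases cs J hu hgt with hmin' | ⟨j, hjJ, hfix⟩
      · have hueq : u' = cs.simple i * u := isMinLen_unique cs J hu' hmin'
        have h1 := hswdec u' hu' hueq
        exact bruhatLT_mul_simple_left cs (by omega)
      · exact absurd (hfix_of j hjJ hfix).symm hne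
    · exfalso
      have hm' := isMinLen_smul_of_lt cs J (i := i) hu (by omega)
      have hueq : u' = cs.simple i * u := isMinLen_unique cs J hu' hm'
      rw [hueq] at hlen_le
      omega
  · rintro ⟨hle, hne⟩
    obtain ⟨v₁, w₁, hv₁MR, hw₁MR, hv₁mk, hw₁mk, hvw₁⟩ := hle
    obtain ⟨u', hu'⟩ := exists_minlen cs J (cs.simple i • τ)
    have hv₁ : v₁ = u' := minRep_eq_minlen cs J hu' hv₁MR hv₁mk
    have hw₁ : w₁ = u := minRep_eq_minlen cs J hu hw₁MR hw₁mk
    have hlen_le : cs.length u' ≤ cs.length u := by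
      have : BruhatLE cs u' u := by rw [← hv₁, ← hw₁]; exact hvw₁
      exact this.length_le
    rcases cs.length_simple_mul u i with hgt | hlt
    · exfalso
      rcases isMinLen_smul_cases cs J hu hgt with hmin' | ⟨j, hjJ, hfix⟩
      · have hueq : u' = cs.simple i * u := isMinLen_unique cs J hu' hmin'
        rw [hueq] at hlen_le
        omega
      · exact hne (hfix_of j hjJ hfix)
    · have hm' := isMinLen_smul_of_lt cs J (i := i) hu (by omega)
      have hueq : u' = cs.simple i * u := isMinLen_unique cs J hu' hm'
      have h1 := hswdec u' hu' hueq
      exact bruhatLT_mul_simple_left' cs (by omega)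
  · intro hfix hvlt
    have hvasc : cs.length v < cs.length (cs.simple i * v) := by
      have h1 := hvlt.1.length_le
      have h2 := cs.length_simple_mul_ne v i
      omega
    rcases cs.length_simple_mul w i with hgt | hlt
    · exact bruhatLT_mul_simple_left cs hgt
    · exfalso
      have hZ := property_Z cs (by omega) hvw hvasc
      have hmk : (QuotientGroup.mk (cs.simple i * w) : W ⧸ WJ cs J) = τ := by
        rw [mk_simple_mul, hwτ, hfix]
      have h3 := (hmin (cs.simple i * w) hZ hmk).length_le
      omega

end KMChev

namespace KMChev

/-- let `vW_J ≤ τ` and let `w = up(v,τ)` be the Bruhat-minimum of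
`{x : v ≤ x, xW_J = τ}`. For a simple reflection `s`:
if `sτ > τ` then `sw > w`; if `sτ < τ` then `sw < w`; and if `sτ = τ` and `sv > v`
then `sw > w`. -/
theorem lift_lowlift {B W : Type*} [Group W] {M : CoxeterMatrix B}
    (cs : CoxeterSystem M W) (J : Set B) (i : B) (v w : W) (τ : W ⧸ WJ cs J)
    (hvτ : CosetLE cs J (QuotientGroup.mk v) τ)
    (hw : (BruhatLE cs v w ∧ (QuotientGroup.mk w : W ⧸ WJ cs J) = τ) ∧
      ∀ x : W, BruhatLE cs v x → (QuotientGroup.mk x : W ⧸ WJ cs J) = τ →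
        BruhatLE cs w x) :
    (CosetLT cs J τ (cs.simple i • τ) → BruhatLT cs w (cs.simple i * w)) ∧
    (CosetLT cs J (cs.simple i • τ) τ → BruhatLT cs (cs.simple i * w) w) ∧
    (cs.simple i • τ = τ → BruhatLT cs v (cs.simple i * v) →
      BruhatLT cs w (cs.simple i * w)) :=
  lift_lowlift' cs J i v w τ hw

end KMChev
end

section
/- The total order <_λ on positive real coroots is a reflection order: whenever α <_λ β and aα + bβ is a positive real coroot for some positive reals a, b, one has α <_λ aα+bβ <_λ β. -/
namespace KMChev

open CoxeterSystem

variable {W : Type*} [Group W] {r : ℕ} {M : CoxeterMatrix (Fin r)}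

/-- The rational coroot space, with simple coroots `α_i^∨` as standard basis;
the Dynkin node set is `Fin r` with its standard total order `1 < 2 < ⋯ < r`. -/
abbrev CorootSpace (r : ℕ) := Fin r → ℚ

/-- Data of the real coroots of a symmetrizable Kac-Moody algebra over `ℚ`: the Weyl
group (a Coxeter group `cs`) acting linearly on the coroot space via a generalized
Cartan matrix `A` (GCM conditions and symmetrizability included). -/
structure CorootDataQ (cs : CoxeterSystem M W) where
  act : W →* (CorootSpace r ≃ₗ[ℚ] CorootSpace r)
  A : Fin r → Fin r → ℤ
  A_diag : ∀ i, A i i = 2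
  A_nonpos : ∀ i j, i ≠ j → A i j ≤ 0
  A_zero_iff : ∀ i j, A i j = 0 ↔ A j i = 0
  symmetrizable : ∃ d : Fin r → ℚ, (∀ i, 0 < d i) ∧ ∀ i j, d i * (A i j : ℚ) = d j * A j i
  act_simple : ∀ i j, act (cs.simple i) (Pi.single j 1 : CorootSpace r)
    = (Pi.single j 1 : CorootSpace r) - (A i j : ℚ) • (Pi.single i 1 : CorootSpace r)

/-- The set of positive real coroots. -/
def IsPosCorootQ {cs : CoxeterSystem M W} (D : CorootDataQ cs) (γ : CorootSpace r) : Prop :=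
  (∃ (u : W) (j : Fin r), γ = D.act u (Pi.single j 1 : CorootSpace r)) ∧ ∀ j, 0 ≤ γ j

end KMChev

namespace KMChev

variable {W : Type*} [Group W] {r : ℕ} {M : CoxeterMatrix (Fin r)}

/-- The vector `(1/⟨α,λ⟩)(0, c_1, …, c_r) ∈ ℚ^{r+1}` associated to a coroot
`α = Σ c_i α_i^∨` with `⟨α,λ⟩ > 0`. -/
def lexVec (pl : CorootSpace r →ₗ[ℚ] ℚ) (γ : CorootSpace r) : Fin (r + 1) → ℚ :=
  Fin.cons 0 fun i => γ i / pl γ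

/-- The total order `<_λ` on positive real coroots: coroots with `⟨α,λ⟩ > 0` come
first, ordered lexicographically by their vectors; coroots with `⟨α,λ⟩ = 0` (the
positive coroots of `W_λ`) come last, ordered by a fixed reflection order `rJ`. -/
def LtLam (pl : CorootSpace r →ₗ[ℚ] ℚ) (rJ : CorootSpace r → CorootSpace r → Prop)
    (α β : CorootSpace r) : Prop :=
  (0 < pl α ∧ 0 < pl β ∧ toLex (lexVec pl α) < toLex (lexVec pl β)) ∨
  (0 < pl α ∧ pl β = 0) ∨
  (pl α = 0 ∧ pl β = 0 ∧ rJ α β)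

/-- A positive coroot is nonzero, hence has a strictly positive coordinate. -/
lemma exists_pos_coord {cs : CoxeterSystem M W} {D : CorootDataQ cs} {γ : CorootSpace r}
    (h : IsPosCorootQ D γ) : ∃ j, 0 < γ j := by
  obtain ⟨⟨u, j, rfl⟩, hnn⟩ := h
  have hne : D.act u (Pi.single j 1 : CorootSpace r) ≠ 0 := by
    intro h0
    have : (Pi.single j 1 : CorootSpace r) = 0 := by
      have := congrArg (D.act u).symm h0
      simpa using this
    have := congrFun this j
    simp [Pi.single_apply] at this
  obtain ⟨k, hk⟩ := Function.ne_iff.1 hne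
  exact ⟨k, lt_of_le_of_ne (hnn k) (by simpa [eq_comm] using hk)⟩

lemma toLex_lt_of_le_of_ne {n : ℕ} {f g : Fin n → ℚ} (hle : f ≤ g) (hne : f ≠ g) :
    toLex f < toLex g := by
  haveI hwf : WellFoundedLT (Fin n) := inferInstance
  refine lt_of_le_of_ne (Pi.toLex_monotone hle) ?_
  intro h
  exact hne (toLex.injective h)

/-- A strict convex combination lies strictly between in the lex order. -/
lemma lex_between {n : ℕ} {v w c : Fin n → ℚ} {t : ℚ} (ht0 : 0 < t) (ht1 : t < 1)
    (hc : ∀ k, c k = t * v k + (1 - t) * w k) (hvw : toLex v < toLex w) :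
    toLex v < toLex c ∧ toLex c < toLex w := by
  obtain ⟨i, hpre, hi⟩ := hvw
  simp only [Pi.toLex_apply] at hpre hi
  have hpre' : ∀ j, j < i → c j = v j := by
    intro j hj
    rw [hc j, hpre j hj]; ring
  constructor
  · refine ⟨i, fun j hj => (hpre' j hj).symm, ?_⟩
    show v i < c i
    rw [hc i]; nlinarith
  · refine ⟨i, fun j hj => (hpre' j hj).trans (hpre j hj), ?_⟩
    show c i < w i
    rw [hc i]; nlinarith

/-- the total order `<_λ` on positive real coroots is a reflection
order: whenever `α <_λ β` and `aα + bβ` is a positive real coroot for positive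
rationals `a, b`, one has `α <_λ aα + bβ <_λ β`. -/
theorem ltLam_reflection_order {cs : CoxeterSystem M W} (D : CorootDataQ cs)
    (pl : CorootSpace r →ₗ[ℚ] ℚ)
    (hdom : ∀ i, 0 ≤ pl (Pi.single i 1 : CorootSpace r))
    (hint : ∀ i, ∃ m : ℤ, pl (Pi.single i 1 : CorootSpace r) = (m : ℚ))
    (hposdom : ∀ γ, IsPosCorootQ D γ → 0 ≤ pl γ)
    (rJ : CorootSpace r → CorootSpace r → Prop)
    -- `rJ` is a reflection order on the positive coroots orthogonal to `λ`:
    (hrJ_tot : ∀ α β, IsPosCorootQ D α → IsPosCorootQ D β → pl α = 0 → pl β = 0 →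
      α ≠ β → rJ α β ∨ rJ β α)
    (hrJ_asymm : ∀ α β, rJ α β → ¬ rJ β α)
    (hrJ_trans : ∀ α β γ, rJ α β → rJ β γ → rJ α γ)
    (hrJ_refl_order : ∀ α β, IsPosCorootQ D α → IsPosCorootQ D β → pl α = 0 →
      pl β = 0 → rJ α β → ∀ a b : ℚ, 0 < a → 0 < b →
      IsPosCorootQ D (a • α + b • β) →
      rJ α (a • α + b • β) ∧ rJ (a • α + b • β) β) :
    ∀ α β, IsPosCorootQ D α → IsPosCorootQ D β →
      ∀ a b : ℚ, 0 < a → 0 < b → IsPosCorootQ D (a • α + b • β) →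
      LtLam pl rJ α β →
      LtLam pl rJ α (a • α + b • β) ∧ LtLam pl rJ (a • α + b • β) β := by
  intro α β hα hβ a b ha hb hγ hlt
  set γ := a • α + b • β with hγdef
  have hplγ : pl γ = a * pl α + b * pl β := by
    simp [hγdef, map_add, map_smul, smul_eq_mul]
  rcases hlt with ⟨hA, hB, hlex⟩ | ⟨hA, hB⟩ | ⟨hA, hB, hr⟩
  · -- both positive: convex combination
    have hplγpos : 0 < pl γ := by rw [hplγ]; positivity
    set t : ℚ := a * pl α / pl γ with ht
    have ht0 : 0 < t := by positivity
    have ht1 : t < 1 := by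
      rw [ht, div_lt_one hplγpos, hplγ]
      nlinarith
    have h1t : 1 - t = b * pl β / pl γ := by
      field_simp [ht, hplγ]
      rw [ht, sub_mul, div_mul_cancel₀ _ hplγpos.ne', hplγ]; ring
    have hc : ∀ k, lexVec pl γ k = t * lexVec pl α k + (1 - t) * lexVec pl β k := by
      intro k
      refine Fin.cases ?_ (fun i => ?_) k
      · simp [lexVec]
      · simp only [lexVec, Fin.cons_succ, ht, h1t]
        have hγi : γ i = a * α i + b * β i := by simp [hγdef]
        rw [hγi]
        field_simp
        rw [hplγ]; ring
    obtain ⟨h1, h2⟩ := lex_between ht0 ht1 hc hlex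
    exact ⟨Or.inl ⟨hA, hplγpos, h1⟩, Or.inl ⟨hplγpos, hB, h2⟩⟩
  · -- pl α > 0, pl β = 0
    have hplγpos : 0 < pl γ := by rw [hplγ, hB]; nlinarith
    have hplγ' : pl γ = a * pl α := by rw [hplγ, hB]; ring
    refine ⟨Or.inl ⟨hA, hplγpos, ?_⟩, Or.inr (Or.inl ⟨hplγpos, hB⟩)⟩
    obtain ⟨j, hj⟩ := exists_pos_coord hβ
    have hαnn : ∀ k, 0 ≤ α k := hα.2
    have hβnn : ∀ k, 0 ≤ β k := hβ.2
    apply toLex_lt_of_le_of_ne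
    · intro k
      refine Fin.cases ?_ (fun i => ?_) k
      · simp [lexVec]
      · simp only [lexVec, Fin.cons_succ]
        have hγi : γ i = a * α i + b * β i := by simp [hγdef]
        rw [hγi, hplγ', div_le_div_iff₀ hA (by positivity)]
        nlinarith [mul_nonneg (mul_nonneg hb.le (hβnn i)) hA.le]
    · intro heq
      have := congrFun heq j.succ
      simp only [lexVec, Fin.cons_succ] at this
      have hγj : γ j = a * α j + b * β j := by simp [hγdef]
      rw [hγj, hplγ'] at this
      rw [div_eq_div_iff hA.ne' (by positivity)] at this
      nlinarith [mul_pos (mul_pos hb hj) hA]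
  · -- pl α = pl β = 0
    have hplγ0 : pl γ = 0 := by rw [hplγ, hA, hB]; ring
    obtain ⟨h1, h2⟩ := hrJ_refl_order α β hα hβ hA hB hr a b ha hb hγ
    exact ⟨Or.inr (Or.inr ⟨hA, hplγ0, h1⟩), Or.inr (Or.inr ⟨hplγ0, hB, h2⟩)⟩

end KMChev
end

section
/- In the nilHecke ring, write T_w e^λ = Σ_v b^w_{vλ} T_v. If s_i w < w and z < s_i z, then the coefficients satisfy the recurrences b^w_{zλ} = T_i · b^{s_iw}_{zλ} and b^w_{s_iz,λ} = T_i · b^{s_iw}_{s_iz,λ} + s_i(b^{s_iw}_{zλ} - b^{s_iw}_{s_iz,λ}). -/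
namespace KMChev

open CoxeterSystem

/-- in the nilHecke ring, writing `T_w e^λ = Σ_v b^w_{vλ} T_v`, if
`s_i w < w` and `z < s_i z` then the coefficients satisfy the recurrences
`b^w_{zλ} = T_i · b^{s_iw}_{zλ}` and
`b^w_{s_iz,λ} = T_i · b^{s_iw}_{s_iz,λ} + s_i(b^{s_iw}_{zλ} - b^{s_iw}_{s_iz,λ})`.

Here `R(T) = ℤ[Λ]`; `s_i` acts on `R(T)` by `sR i` (induced by
`μ ↦ μ - ⟨α_i^∨,μ⟩ α_i`); `T_i = (1-e^{α_i})⁻¹(s_i - 1)` is characterized by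
`(1 - e^{α_i}) (T_i f) = s_i f - f`; `T_w` is defined by `T_1 = id` and
`T_{s_i w} = T_i ∘ T_w` whenever `ℓ(s_i w) = ℓ(w) + 1` (well-defined since the `T_i`
satisfy the braid relations and `T_i² = -T_i`); and the coefficients `b^w_{vλ}` are
determined by `T_w (e^λ f) = Σ_v b^w_{vλ} (T_v f)`, using that the `T_v` are
left-`R(T)`-linearly independent operators (`hindep`). -/
theorem nilHecke_chevalley_recurrence
    {B W : Type*} [Group W] {M : CoxeterMatrix B} (cs : CoxeterSystem M W)
    {Λ : Type*} [AddCommGroup Λ]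
    (αr : B → Λ)                          -- simple roots
    (cor : B → (Λ →+ ℤ))                  -- simple coroot pairings ⟨α_i^∨, ·⟩
    (hcor : ∀ i, cor i (αr i) = 2)
    (sR : B → (AddMonoidAlgebra ℤ Λ ≃+* AddMonoidAlgebra ℤ Λ))
    (hsR : ∀ i (μ : Λ), sR i (AddMonoidAlgebra.single μ 1)
      = AddMonoidAlgebra.single (μ - cor i μ • αr i) 1)
    (hreg : ∀ i (x : AddMonoidAlgebra ℤ Λ),
      (1 - AddMonoidAlgebra.single (αr i) (1 : ℤ)) * x = 0 → x = 0)
    (Top : B → AddMonoidAlgebra ℤ Λ →+ AddMonoidAlgebra ℤ Λ)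
    (hTop : ∀ i f, (1 - AddMonoidAlgebra.single (αr i) (1 : ℤ)) * Top i f
      = sR i f - f)
    (Tw : W → (AddMonoidAlgebra ℤ Λ →+ AddMonoidAlgebra ℤ Λ))
    (hTw_one : Tw 1 = AddMonoidHom.id _)
    (hTw_mul : ∀ (i : B) (w : W), cs.length (cs.simple i * w) = cs.length w + 1 →
      ∀ f, Tw (cs.simple i * w) f = Top i (Tw w f))
    (lam : Λ)                             -- the weight λ
    (bc : W → W → AddMonoidAlgebra ℤ Λ)   -- the coefficients b^w_{vλ}
    (hbc_fin : ∀ u, (Function.support (bc u)).Finite)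
    (hbc : ∀ (u : W) (f : AddMonoidAlgebra ℤ Λ),
      Tw u (AddMonoidAlgebra.single lam 1 * f) = ∑ᶠ v, bc u v * Tw v f)
    (hindep : ∀ c : W → AddMonoidAlgebra ℤ Λ, (Function.support c).Finite →
      (∀ f, ∑ᶠ v, c v * Tw v f = 0) → ∀ v, c v = 0)
    (i : B) (w z : W)
    (hw : cs.length (cs.simple i * w) < cs.length w)
    (hz : cs.length z < cs.length (cs.simple i * z)) :
    bc w z = Top i (bc (cs.simple i * w) z) ∧
    bc w (cs.simple i * z) = Top i (bc (cs.simple i * w) (cs.simple i * z)) +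
      sR i (bc (cs.simple i * w) z - bc (cs.simple i * w) (cs.simple i * z)) := by
  classical
  set a : AddMonoidAlgebra ℤ Λ := AddMonoidAlgebra.single (αr i) (1 : ℤ) with ha
  -- sR i is an involution
  have hsinv : ∀ x, sR i (sR i x) = x := by
    intro x
    induction x using AddMonoidAlgebra.induction_linear with
    | zero => simp
    | add f g hf hg => rw [map_add, map_add, hf, hg]
    | single μ n =>
      have h1 : (AddMonoidAlgebra.single μ n : AddMonoidAlgebra ℤ Λ)
          = n • AddMonoidAlgebra.single μ (1 : ℤ) := by
        rw [AddMonoidAlgebra.smul_single, smul_eq_mul, mul_one]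
      rw [h1, map_zsmul, map_zsmul, hsR, hsR]
      congr 2
      simp only [map_sub, map_zsmul, hcor, smul_eq_mul]
      module
  -- sR i (a) = a⁻¹ (as single (-α))
  have hsa : sR i a = AddMonoidAlgebra.single (-(αr i)) (1 : ℤ) := by
    rw [ha, hsR, hcor]
    congr 1
    abel
  have hainv : a * AddMonoidAlgebra.single (-(αr i)) (1 : ℤ) = 1 := by
    rw [ha, AddMonoidAlgebra.single_mul_single, AddMonoidAlgebra.one_def]
    congr 1 <;> simp
  -- Lemma B: sR i (Top i f) = a * Top i f
  have hB : ∀ f, sR i (Top i f) = a * Top i f := by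
    intro f
    have h1 : (1 - sR i a) * sR i (Top i f) = f - sR i f := by
      have := congrArg (sR i) (hTop i f)
      simpa [map_mul, map_sub, map_one, hsinv] using this
    rw [hsa] at h1
    have h2 := hTop i f
    have key : (1 - a) * (sR i (Top i f) - a * Top i f) = 0 := by
      linear_combination (-a) * h1 + (-a) * h2 + (-(sR i (Top i f))) * hainv
    exact sub_eq_zero.mp (hreg i _ key)
  -- Lemma C: Top i ∘ Top i = - Top i
  have hC : ∀ f, Top i (Top i f) = - Top i f := by
    intro f
    have h1 := hTop i (Top i f)
    have h2 := hB f
    have key : (1 - a) * (Top i (Top i f) + Top i f) = 0 := by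
      linear_combination h1 + h2
    have := hreg i _ key
    exact eq_neg_of_add_eq_zero_left this
  -- Lemma D (Leibniz rule)
  have hD : ∀ g h, Top i (g * h) = Top i g * h + sR i g * Top i h := by
    intro g h
    have h1 := hTop i (g * h)
    have h2 := hTop i g
    have h3 := hTop i h
    have hm : sR i (g * h) = sR i g * sR i h := map_mul _ g h
    have key : (1 - a) * (Top i (g * h) - (Top i g * h + sR i g * Top i h)) = 0 := by
      linear_combination h1 - h * h2 - sR i g * h3 + hm
    exact sub_eq_zero.mp (hreg i _ key)
  -- length facts
  have hne : ∀ v : W, cs.length (cs.simple i * v) ≠ cs.length v :=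
    fun v => cs.length_simple_mul_ne v i
  have hcancel : ∀ v : W, cs.simple i * (cs.simple i * v) = v :=
    fun v => cs.simple_mul_simple_cancel_left i
  have hlt_of_not : ∀ v : W, ¬ cs.length v < cs.length (cs.simple i * v) →
      cs.length (cs.simple i * v) < cs.length v := by
    intro v h
    exact lt_of_le_of_ne (not_lt.mp h) (hne v)
  have hsucc : ∀ v : W, cs.length v < cs.length (cs.simple i * v) →
      cs.length (cs.simple i * v) = cs.length v + 1 := by
    intro v h
    rcases cs.length_simple_mul v i with h' | h'
    · exact h'
    · omega
  -- Top i (Tw v f)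
  have hTopTw : ∀ (v : W) f, Top i (Tw v f) =
      if cs.length v < cs.length (cs.simple i * v) then Tw (cs.simple i * v) f
      else - Tw v f := by
    intro v f
    by_cases h : cs.length v < cs.length (cs.simple i * v)
    · rw [if_pos h, hTw_mul i v (hsucc v h) f]
    · rw [if_neg h]
      have h1 : cs.length (cs.simple i * v) < cs.length v := hlt_of_not v h
      have h2 : cs.length (cs.simple i * (cs.simple i * v))
          = cs.length (cs.simple i * v) + 1 := by
        exact hsucc (cs.simple i * v) (by rwa [hcancel v])
      have h3 : Tw v f = Top i (Tw (cs.simple i * v) f) := by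
        conv_lhs => rw [← hcancel v]
        exact hTw_mul i (cs.simple i * v) h2 f
      rw [h3, hC, ← h3]
  set si := cs.simple i with hsi
  set w' := si * w with hw'def
  have hww' : si * w' = w := hcancel w
  have hlw : cs.length (si * w') = cs.length w' + 1 := by
    refine hsucc w' ?_
    rw [hww']
    exact hw
  -- the candidate coefficients
  set ecoef : W → AddMonoidAlgebra ℤ Λ := fun v =>
    if cs.length v < cs.length (si * v) then 0
    else sR i (bc w' (si * v) - bc w' v) with hecoef
  set d : W → AddMonoidAlgebra ℤ Λ := fun v => Top i (bc w' v) + ecoef v with hd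
  -- finiteness facts
  have hfin_shift : (Function.support (fun v => bc w' (si * v))).Finite := by
    have heq : Function.support (fun v => bc w' (si * v))
        = (fun v => si * v) ⁻¹' (Function.support (bc w')) := rfl
    rw [heq]
    exact Set.Finite.preimage ((mul_right_injective si).injOn)
      (hbc_fin w')
  have hfin_e : (Function.support ecoef).Finite := by
    refine Set.Finite.subset (hfin_shift.union (hbc_fin w')) ?_
    intro v hv
    by_contra hvn
    simp only [Set.mem_union, Function.mem_support, not_or, not_not] at hvn
    apply hv
    simp only [hecoef, hvn.1, hvn.2, sub_zero, map_zero, ite_self]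
  have hfin_Topbc : (Function.support (fun v => Top i (bc w' v))).Finite := by
    refine Set.Finite.subset (hbc_fin w') ?_
    intro v hv
    by_contra hvn
    simp only [Function.mem_support, not_not] at hvn
    exact hv (by simp [hvn])
  have hfin_d : (Function.support d).Finite := by
    refine Set.Finite.subset (hfin_Topbc.union hfin_e) ?_
    intro v hv
    by_contra hvn
    simp only [Set.mem_union, Function.mem_support, not_or, not_not] at hvn
    exact hv (by simp [hd, hvn.1, hvn.2])
  -- the key identity
  have key : ∀ f, ∑ᶠ v, (bc w v - d v) * Tw v f = 0 := by
    intro f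
    have hfin1 : (Function.support fun v => bc w v * Tw v f).Finite := by
      refine Set.Finite.subset (hbc_fin w) ?_
      intro v hv
      by_contra hvn
      simp only [Function.mem_support, not_not] at hvn
      exact hv (by simp [hvn])
    have hfin2 : (Function.support fun v => d v * Tw v f).Finite := by
      refine Set.Finite.subset hfin_d ?_
      intro v hv
      by_contra hvn
      simp only [Function.mem_support, not_not] at hvn
      exact hv (by simp [hvn])
    have split : ∑ᶠ v, (bc w v - d v) * Tw v f
        = (∑ᶠ v, bc w v * Tw v f) - ∑ᶠ v, d v * Tw v f := by
      rw [← finsum_sub_distrib hfin1 hfin2]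
      exact finsum_congr fun v => sub_mul _ _ _
    rw [split, sub_eq_zero]
    -- LHS equals Top i of the w' sum
    have hfinw' : (Function.support fun v => bc w' v * Tw v f).Finite := by
      refine Set.Finite.subset (hbc_fin w') ?_
      intro v hv
      by_contra hvn
      simp only [Function.mem_support, not_not] at hvn
      exact hv (by simp [hvn])
    have lhs_eq : ∑ᶠ v, bc w v * Tw v f
        = Top i (∑ᶠ v, bc w' v * Tw v f) := by
      rw [← hbc w', ← hbc w, ← hww', hTw_mul i w' hlw]
    rw [lhs_eq, AddMonoidHom.map_finsum _ hfinw']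
    -- pointwise Leibniz
    have hpt : ∀ v, Top i (bc w' v * Tw v f)
        = Top i (bc w' v) * Tw v f + sR i (bc w' v) * Top i (Tw v f) :=
      fun v => hD _ _
    rw [finsum_congr hpt]
    -- split sums
    set G1 : W → AddMonoidAlgebra ℤ Λ := fun v =>
      if cs.length v < cs.length (si * v) then sR i (bc w' v) * Tw (si * v) f else 0
      with hG1
    set G2 : W → AddMonoidAlgebra ℤ Λ := fun v =>
      if cs.length v < cs.length (si * v) then 0 else -(sR i (bc w' v) * Tw v f)
      with hG2
    have hGsplit : ∀ v, sR i (bc w' v) * Top i (Tw v f) = G1 v + G2 v := by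
      intro v
      by_cases h : cs.length v < cs.length (si * v)
      · simp [hG1, hG2, h, hTopTw v f]
      · simp [hG1, hG2, h, hTopTw v f, mul_neg]
    have hfinG1 : (Function.support G1).Finite := by
      refine Set.Finite.subset (hbc_fin w') ?_
      intro v hv
      by_contra hvn
      simp only [Function.mem_support, not_not] at hvn
      exact hv (by simp [hG1, hvn])
    have hfinG2 : (Function.support G2).Finite := by
      refine Set.Finite.subset (hbc_fin w') ?_
      intro v hv
      by_contra hvn
      simp only [Function.mem_support, not_not] at hvn
      exact hv (by simp [hG2, hvn])
    have hfinsR : (Function.support fun v => sR i (bc w' v) * Top i (Tw v f)).Finite := by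
      refine Set.Finite.subset (hfinG1.union hfinG2) ?_
      intro v hv
      rw [Function.mem_support, hGsplit v] at hv
      by_contra hvn
      simp only [Set.mem_union, Function.mem_support, not_or, not_not] at hvn
      exact hv (by rw [hvn.1, hvn.2, add_zero])
    have hfinTb : (Function.support fun v => Top i (bc w' v) * Tw v f).Finite := by
      refine Set.Finite.subset hfin_Topbc ?_
      intro v hv
      by_contra hvn
      simp only [Function.mem_support, not_not] at hvn
      exact hv (by simp [hvn])
    have hfinE : (Function.support fun v => ecoef v * Tw v f).Finite := by
      refine Set.Finite.subset hfin_e ?_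
      intro v hv
      by_contra hvn
      simp only [Function.mem_support, not_not] at hvn
      exact hv (by simp [hvn])
    rw [finsum_add_distrib hfinTb hfinsR]
    have hrhs : ∑ᶠ v, d v * Tw v f
        = (∑ᶠ v, Top i (bc w' v) * Tw v f) + ∑ᶠ v, ecoef v * Tw v f := by
      rw [← finsum_add_distrib hfinTb hfinE]
      exact finsum_congr fun v => add_mul _ _ _
    rw [hrhs]
    congr 1
    -- remaining: second sums agree
    rw [finsum_congr hGsplit, finsum_add_distrib hfinG1 hfinG2]
    have hPiff : ∀ v : W, (cs.length (si * v) < cs.length (si * (si * v)))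
        ↔ ¬ cs.length v < cs.length (si * v) := by
      intro v
      rw [hcancel v]
      constructor
      · intro h h'
        omega
      · intro h
        exact hlt_of_not v h
    have hG1shift : ∑ᶠ v, G1 v = ∑ᶠ v, G1 (si * v) :=
      (finsum_comp_equiv (Equiv.mulLeft si)).symm
    rw [hG1shift, ← finsum_add_distrib
      (by
        have heq : Function.support (fun v => G1 (si * v))
            = (fun v => si * v) ⁻¹' (Function.support G1) := rfl
        show (Function.support (fun v => G1 (si * v))).Finite
        rw [heq]
        exact Set.Finite.preimage ((mul_right_injective si).injOn)
          hfinG1)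
      hfinG2]
    refine finsum_congr fun v => ?_
    by_cases h : cs.length v < cs.length (si * v)
    · have h1 : ¬ cs.length (si * v) < cs.length (si * (si * v)) := by
        rw [hPiff]
        exact not_not_intro h
      simp [hG1, hG2, hecoef, h, h1]
    · have h1 : cs.length (si * v) < cs.length (si * (si * v)) := (hPiff v).mpr h
      simp only [hG1, hG2, hecoef, h, if_neg h, if_pos h1, hcancel v, if_false]
      rw [map_sub, sub_mul]
      ring
  -- apply independence
  have hc := hindep (fun v => bc w v - d v)
    (Set.Finite.subset ((hbc_fin w).union hfin_d) (by
      intro v hv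
      by_contra hvn
      simp only [Set.mem_union, Function.mem_support, not_or, not_not] at hvn
      exact hv (by simp [hvn.1, hvn.2]))) key
  constructor
  · rw [sub_eq_zero.mp (hc z)]
    simp only [hd]
    have h2 : ecoef z = 0 := by
      simp only [hecoef, if_pos hz]
    rw [h2, add_zero]
  · rw [sub_eq_zero.mp (hc (si * z))]
    simp only [hd]
    have h2 : ecoef (si * z) = sR i (bc w' z - bc w' (si * z)) := by
      have h3 : ¬ cs.length (si * z) < cs.length (si * (si * z)) := by
        rw [hcancel z]
        omega
      simp only [hecoef, if_neg h3, hcancel z]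
    rw [h2]

end KMChev
end
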